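/- arXiv:1206.2941 — 4 statements merged into one kernel-verified Lean document; each statement's English description precedes it below -/
import Mathlib

section
/- Let G be an ∞-groupoid of type C (a globular presheaf on a contractible globular extension C). For every n ≥ 1, the quotient graph Π_n(G), with objects the (n-1)-arrows of G and morphisms the n-arrows up to homotopy, equipped with the composition induced by *^n_{n-1} and identities induced by k_{n-1}, is a groupoid: composition is associative, units are neutral, and every morphism is invertible (the inverse being induced by w^{n-1}_n). -/
/-!
STATEMENT 4: Let `G` be an ∞-groupoid of type `C` (a globular presheaf on a
contractible globular extension `C`). For every `n ≥ 1` (here `n = m + 1`), the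
quotient graph `Π_n(G)` — objects the `(n-1)`-arrows, morphisms the `n`-arrows up to
homotopy, composition induced by `*^n_{n-1}` and identities by `κ_{n-1}` — is a
groupoid, inverses being induced by `w^{n-1}_n`.  We express this at the level of
representatives: the homotopy relation is an equivalence relation compatible with
composition, and associativity, unit and inverse laws hold up to homotopy.
-/

open CategoryTheory Opposite

universe w v u

/-- A coglobular object: a category under the globe category 𝔾. -/
structure Coglob (E : Type u) [Category.{v} E] where
  D : ℕ → E
  σ : ∀ n, D n ⟶ D (n + 1)
  τ : ∀ n, D n ⟶ D (n + 1)
  relσ : ∀ n, σ n ≫ σ (n + 1) = σ n ≫ τ (n + 1)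
  relτ : ∀ n, τ n ≫ σ (n + 1) = τ n ≫ τ (n + 1)

namespace Coglob

variable {E : Type u} [Category.{v} E] (Φ : Coglob E)

/-- Iterated cosource `σ^{j+k}_j : D j ⟶ D (j+k)`. -/
def σUp (j : ℕ) : ∀ k : ℕ, Φ.D j ⟶ Φ.D (j + k)
  | 0 => 𝟙 _
  | k + 1 => σUp j k ≫ Φ.σ (j + k)

/-- Iterated cotarget `τ^{j+k}_j : D j ⟶ D (j+k)`. -/
def τUp (j : ℕ) : ∀ k : ℕ, Φ.D j ⟶ Φ.D (j + k)
  | 0 => 𝟙 _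
  | k + 1 => τUp j k ≫ Φ.τ (j + k)

lemma τUp_σ (j k : ℕ) :
    Φ.τUp j (k + 1) ≫ Φ.σ (j + k + 1) = Φ.τUp j (k + 2) := by
  show (Φ.τUp j k ≫ Φ.τ (j + k)) ≫ Φ.σ (j + k + 1) =
    (Φ.τUp j k ≫ Φ.τ (j + k)) ≫ Φ.τ (j + k + 1)
  rw [Category.assoc, Category.assoc, Φ.relτ]

lemma σUp_τ (j k : ℕ) :
    Φ.σUp j (k + 1) ≫ Φ.τ (j + k + 1) = Φ.σUp j (k + 2) := by
  show (Φ.σUp j k ≫ Φ.σ (j + k)) ≫ Φ.τ (j + k + 1) =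
    (Φ.σUp j k ≫ Φ.σ (j + k)) ≫ Φ.σ (j + k + 1)
  rw [Category.assoc, Category.assoc, Φ.relσ]

/-- Iterated cosource `D 0 ⟶ D n`. -/
def σZero : ∀ n : ℕ, Φ.D 0 ⟶ Φ.D n
  | 0 => 𝟙 _
  | n + 1 => σZero n ≫ Φ.σ n

/-- Globular parallelism of two morphisms with source a globe `D n`. -/
def Par : ∀ {n : ℕ} {Y : E}, (Φ.D n ⟶ Y) → (Φ.D n ⟶ Y) → Prop
  | 0, _, _, _ => True
  | m + 1, _, f, g => (Φ.σ m ≫ f = Φ.σ m ≫ g) ∧ (Φ.τ m ≫ f = Φ.τ m ≫ g)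

end Coglob

/-- Tables of dimensions, indexed by the dimension of the first globe: the table
`cons j d e T` glues a disk of dimension `j + d + 1` along the dimension `j` onto a
table whose first dimension is `j + e + 1` (so that both dimensions exceed the
gluing dimension, as required for a table of dimensions). -/
inductive GTable : ℕ → Type where
  | single (i : ℕ) : GTable i
  | cons (j d e : ℕ) (T : GTable (j + e + 1)) : GTable (j + d + 1)

/-- Dimension of a table: the greatest dimension appearing in it. -/
def GTable.dim : ∀ {i : ℕ}, GTable i → ℕ
  | _, .single i => i
  | _, .cons j d _ T => max (j + d + 1) T.dim

/-- Chosen globular sums on a category under 𝔾: for every table of dimensions, an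
iterated amalgamated sum of globes, glued along iterated cosources and cotargets,
with its universal property. This is the structure of a globular extension. -/
structure GSums {E : Type u} [Category.{v} E] (Φ : Coglob E) where
  S : ∀ {i : ℕ}, GTable i → E
  single_eq : ∀ i, S (.single i) = Φ.D i
  ι : ∀ {i : ℕ} (T : GTable i), Φ.D i ⟶ S T
  ι_single : ∀ i, ι (.single i) = eqToHom (single_eq i).symm
  ρ : ∀ {j d e : ℕ} (T : GTable (j + e + 1)), S T ⟶ S (.cons j d e T)
  glue : ∀ {j d e : ℕ} (T : GTable (j + e + 1)),
    Φ.σUp j (d + 1) ≫ ι (.cons j d e T) = Φ.τUp j (e + 1) ≫ ι T ≫ ρ T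
  desc : ∀ {j d e : ℕ} (T : GTable (j + e + 1)) {Y : E}
    (f : Φ.D (j + d + 1) ⟶ Y) (g : S T ⟶ Y),
    Φ.σUp j (d + 1) ≫ f = Φ.τUp j (e + 1) ≫ ι T ≫ g → (S (.cons j d e T) ⟶ Y)
  ι_desc : ∀ {j d e : ℕ} (T : GTable (j + e + 1)) {Y : E}
    (f : Φ.D (j + d + 1) ⟶ Y) (g : S T ⟶ Y) (h), ι (.cons j d e T) ≫ desc T f g h = f
  ρ_desc : ∀ {j d e : ℕ} (T : GTable (j + e + 1)) {Y : E}
    (f : Φ.D (j + d + 1) ⟶ Y) (g : S T ⟶ Y) (h), ρ T ≫ desc T f g h = g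
  hom_ext : ∀ {j d e : ℕ} (T : GTable (j + e + 1)) {Y : E}
    (m m' : S (.cons j d e T) ⟶ Y),
    ι (.cons j d e T) ≫ m = ι (.cons j d e T) ≫ m' → ρ T ≫ m = ρ T ≫ m' → m = m'

namespace GSums

variable {E : Type u} [Category.{v} E] {Φ : Coglob E} (GS : GSums Φ)

/-- The binary globular sum `D (j+k+1) ∐_{D j} D (j+k+1)`. -/
def Btab (j k : ℕ) : GTable (j + k + 1) := .cons j k k (.single (j + k + 1))

/-- First canonical morphism `ε₁ : D (j+k+1) ⟶ D (j+k+1) ∐_{D j} D (j+k+1)`. -/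
def ε₁ (j k : ℕ) : Φ.D (j + k + 1) ⟶ GS.S (Btab j k) := GS.ι (Btab j k)

/-- Second canonical morphism `ε₂ : D (j+k+1) ⟶ D (j+k+1) ∐_{D j} D (j+k+1)`. -/
def ε₂ (j k : ℕ) : Φ.D (j + k + 1) ⟶ GS.S (Btab j k) :=
  eqToHom (GS.single_eq (j + k + 1)).symm ≫ GS.ρ (GTable.single (j + k + 1))

/-- `C` is `(∞,0)`-contractible: every admissible pair admits a lifting; a pair
`(f, g) : D n ⟶ S` is admissible when `S` is a globular sum of dimension `≤ n + 1`
and `f, g` are globularly parallel. -/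
def Contractible : Prop :=
  ∀ (n : ℕ) {i : ℕ} (T : GTable i), T.dim ≤ n + 1 →
    ∀ f g : Φ.D n ⟶ GS.S T, Φ.Par f g →
      ∃ h : Φ.D (n + 1) ⟶ GS.S T, Φ.σ n ≫ h = f ∧ Φ.τ n ≫ h = g

/-- A presheaf `X` on `C` is a model (an ∞-groupoid of type `C`) when it sends each
globular sum to the corresponding iterated fiber product; equivalently each
amalgamation stage is sent to a pullback of sets. -/
def IsModel (X : Eᵒᵖ ⥤ Type w) : Prop :=
  ∀ {j d e : ℕ} (T : GTable (j + e + 1))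
    (a : X.obj (op (Φ.D (j + d + 1)))) (b : X.obj (op (GS.S T))),
    X.map (Φ.σUp j (d + 1)).op a = X.map (Φ.τUp j (e + 1) ≫ GS.ι T).op b →
      ∃! x : X.obj (op (GS.S (.cons j d e T))),
        X.map (GS.ι (.cons j d e T)).op x = a ∧ X.map (GS.ρ T).op x = b

/-- The amalgamated sum `f ∐_{D j} f` of an endo-cosimplicial-type map of globes. -/
def amalgMap (j k : ℕ) (f : Φ.D (j + k + 1) ⟶ Φ.D (j + k + 2))
    (hσ : Φ.σUp j (k + 1) ≫ f = Φ.σUp j (k + 2))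
    (hτ : Φ.τUp j (k + 1) ≫ f = Φ.τUp j (k + 2)) :
    GS.S (Btab j k) ⟶ GS.S (Btab j (k + 1)) :=
  GS.desc (GTable.single (j + k + 1)) (f ≫ GS.ε₁ j (k + 1))
    (eqToHom (GS.single_eq (j + k + 1)) ≫ f ≫ GS.ε₂ j (k + 1)) (by
      have h1 := GS.glue (j := j) (d := k + 1) (e := k + 1) (GTable.single (j + (k + 1) + 1))
      rw [GS.ι_single] at h1
      simp only [GS.ι_single, ← Category.assoc, hσ]
      simp only [Category.assoc, eqToHom_trans, eqToHom_refl, Category.id_comp]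
      rw [← Category.assoc, hτ]
      exact h1)

/-- The amalgamated sum `σ ∐_{D j} σ`. -/
def amalgσ (j k : ℕ) : GS.S (Btab j k) ⟶ GS.S (Btab j (k + 1)) :=
  GS.amalgMap j k (Φ.σ (j + k + 1)) rfl (Φ.τUp_σ j k)

/-- The amalgamated sum `τ ∐_{D j} τ`. -/
def amalgτ (j k : ℕ) : GS.S (Btab j k) ⟶ GS.S (Btab j (k + 1)) :=
  GS.amalgMap j k (Φ.τ (j + k + 1)) (Φ.σUp_τ j k) rfl

end GSums

/-- A pregroupoidal structure on a (contractible) globular extension: chosen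
coherence morphisms `∇^i_j`, `κ_i` and `w^i_j` for compositions, units and inverses,
each a lifting of the corresponding admissible pair. -/
structure Pregroupoidal {E : Type u} [Category.{v} E] {Φ : Coglob E} (GS : GSums Φ) where
  nabla : ∀ j k, Φ.D (j + k + 1) ⟶ GS.S (GSums.Btab j k)
  kappa : ∀ n, Φ.D (n + 1) ⟶ Φ.D n
  winv : ∀ j k, Φ.D (j + k + 1) ⟶ Φ.D (j + k + 1)
  kappa_σ : ∀ n, Φ.σ n ≫ kappa n = 𝟙 (Φ.D n)
  kappa_τ : ∀ n, Φ.τ n ≫ kappa n = 𝟙 (Φ.D n)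
  nabla_σ₀ : ∀ j, Φ.σ j ≫ nabla j 0 = Φ.σ j ≫ GS.ε₂ j 0
  nabla_τ₀ : ∀ j, Φ.τ j ≫ nabla j 0 = Φ.τ j ≫ GS.ε₁ j 0
  nabla_σ : ∀ j k, Φ.σ (j + k + 1) ≫ nabla j (k + 1) = nabla j k ≫ GS.amalgσ j k
  nabla_τ : ∀ j k, Φ.τ (j + k + 1) ≫ nabla j (k + 1) = nabla j k ≫ GS.amalgτ j k
  winv_σ₀ : ∀ j, Φ.σ j ≫ winv j 0 = Φ.τ j
  winv_τ₀ : ∀ j, Φ.τ j ≫ winv j 0 = Φ.σ j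
  winv_σ : ∀ j k, Φ.σ (j + k + 1) ≫ winv j (k + 1) = winv j k ≫ Φ.σ (j + k + 1)
  winv_τ : ∀ j k, Φ.τ (j + k + 1) ≫ winv j (k + 1) = winv j k ≫ Φ.τ (j + k + 1)

section ModelOps

variable {E : Type u} [Category.{v} E] {Φ : Coglob E} {GS : GSums Φ}
variable (X : Eᵒᵖ ⥤ Type w)

/-- The set of `n`-arrows of a globular presheaf. -/
def arr (n : ℕ) : Type w := X.obj (op (Φ.D n))

variable {X}

/-- Source of an `(n+1)`-arrow. -/
def asrc {n : ℕ} (u : arr (Φ := Φ) X (n + 1)) : arr (Φ := Φ) X n :=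
  X.map (Φ.σ n).op u

/-- Target of an `(n+1)`-arrow. -/
def atgt {n : ℕ} (u : arr (Φ := Φ) X (n + 1)) : arr (Φ := Φ) X n :=
  X.map (Φ.τ n).op u

/-- Homotopy of `n`-arrows: existence of a connecting `(n+1)`-arrow. -/
def Htp (n : ℕ) (u v : arr (Φ := Φ) X n) : Prop :=
  ∃ h : arr (Φ := Φ) X (n + 1), asrc h = u ∧ atgt h = v

/-- Composability in codimension `k+1`: the iterated `j`-source of `u` agrees with
the iterated `j`-target of `v`. -/
def Composable (j k : ℕ) (u v : arr (Φ := Φ) X (j + k + 1)) : Prop :=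
  X.map (Φ.σUp j (k + 1)).op u = X.map (Φ.τUp j (k + 1)).op v

/-- The element of `X` of the binary globular sum determined by a composable pair,
via the model (fiber product) condition. -/
noncomputable def pairUp (hm : GS.IsModel X) {j k : ℕ}
    (u v : arr (Φ := Φ) X (j + k + 1)) (hc : Composable j k u v) :
    X.obj (op (GS.S (GSums.Btab j k))) :=
  (hm (GTable.single (j + k + 1)) u
    (X.map (eqToHom (GS.single_eq (j + k + 1))).op v) (by
      have key : (eqToHom (GS.single_eq (j + k + 1))).op ≫
          (Φ.τUp j (k + 1) ≫ GS.ι (GTable.single (j + k + 1))).op = (Φ.τUp j (k + 1)).op := by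
        rw [← op_comp, Category.assoc, GS.ι_single, eqToHom_trans, eqToHom_refl,
          Category.comp_id]
      refine hc.trans ?_
      rw [← key]
      exact FunctorToTypes.map_comp_apply X _ _ _)).exists.choose

/-- The composition `u *^{j+k+1}_j v` of arrows (`u` after `v`) induced by the chosen
morphism `∇^{j+k+1}_j`; defined as `u` on non-composable pairs. -/
noncomputable def gcomp (hm : GS.IsModel X) (P : Pregroupoidal GS)
    (j k : ℕ) (u v : arr (Φ := Φ) X (j + k + 1)) : arr (Φ := Φ) X (j + k + 1) := by
  classical
  exact if hc : Composable j k u v then X.map (P.nabla j k).op (pairUp hm u v hc) else u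

/-- The unit `(n+1)`-arrow on an `n`-arrow, induced by `κ_n`. -/
def gunit (P : Pregroupoidal GS) {n : ℕ} (u : arr (Φ := Φ) X n) :
    arr (Φ := Φ) X (n + 1) :=
  X.map (P.kappa n).op u

/-- The inverse `w^{j}_{j+k+1}` of an arrow. -/
def gwinv (P : Pregroupoidal GS) (j k : ℕ) (u : arr (Φ := Φ) X (j + k + 1)) :
    arr (Φ := Φ) X (j + k + 1) :=
  X.map (P.winv j k).op u

/-- Iterated counit `D n ⟶ D 0`. -/
def kDown (P : Pregroupoidal GS) : ∀ n : ℕ, Φ.D n ⟶ Φ.D 0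
  | 0 => 𝟙 _
  | n + 1 => P.kappa n ≫ kDown P n

/-- The iterated unit `n`-arrow on an object. -/
def unitIter (P : Pregroupoidal GS) (n : ℕ) (x : arr (Φ := Φ) X 0) :
    arr (Φ := Φ) X n :=
  X.map (kDown P n).op x

end ModelOps
section Aux

variable {E : Type u} [Category.{v} E] {Φ : Coglob E} {GS : GSums Φ} {X : Eᵒᵖ ⥤ Type w}

lemma mapmap {A B C : E} (p : A ⟶ B) (q : B ⟶ C) (x : X.obj (op C)) :
    X.map p.op (X.map q.op x) = X.map (p ≫ q).op x := by
  rw [op_comp, FunctorToTypes.map_comp_apply]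

lemma map_one' {A : E} (x : X.obj (op A)) : X.map (𝟙 A).op x = x := by
  rw [op_id, FunctorToTypes.map_id_apply]

lemma σUp_one (j : ℕ) : Φ.σUp j 1 = Φ.σ j := by
  show Φ.σUp j 0 ≫ Φ.σ (j + 0) = Φ.σ j
  show 𝟙 _ ≫ Φ.σ (j + 0) = Φ.σ j
  simp

lemma τUp_one (j : ℕ) : Φ.τUp j 1 = Φ.τ j := by
  show Φ.τUp j 0 ≫ Φ.τ (j + 0) = Φ.τ j
  show 𝟙 _ ≫ Φ.τ (j + 0) = Φ.τ j
  simp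

lemma ε_glue (j k : ℕ) :
    Φ.σUp j (k + 1) ≫ GS.ε₁ j k = Φ.τUp j (k + 1) ≫ GS.ε₂ j k := by
  have h := GS.glue (j := j) (d := k) (e := k) (GTable.single (j + k + 1))
  rw [GS.ι_single] at h
  simpa [GSums.ε₁, GSums.ε₂, GSums.Btab] using h

end Aux
section Aux2

variable {E : Type u} [Category.{v} E] {Φ : Coglob E} {GS : GSums Φ} {X : Eᵒᵖ ⥤ Type w}

/-- Constructor for maps out of the binary globular sum. -/
def GSums.mkFromPair (GS : GSums Φ) {j k : ℕ} {Y : E} (f g : Φ.D (j + k + 1) ⟶ Y)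
    (hfg : Φ.σUp j (k + 1) ≫ f = Φ.τUp j (k + 1) ≫ g) :
    GS.S (GSums.Btab j k) ⟶ Y :=
  GS.desc (GTable.single (j + k + 1)) f (eqToHom (GS.single_eq (j + k + 1)) ≫ g) (by
    rw [GS.ι_single]
    simpa using hfg)

lemma GSums.ε₁_mkFromPair {j k : ℕ} {Y : E} (f g : Φ.D (j + k + 1) ⟶ Y) (hfg) :
    GS.ε₁ j k ≫ GS.mkFromPair f g hfg = f :=
  GS.ι_desc _ _ _ _

lemma GSums.ε₂_mkFromPair {j k : ℕ} {Y : E} (f g : Φ.D (j + k + 1) ⟶ Y) (hfg) :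
    GS.ε₂ j k ≫ GS.mkFromPair f g hfg = g := by
  unfold GSums.ε₂ GSums.mkFromPair
  erw [Category.assoc, GS.ρ_desc]
  simp

end Aux2
section Aux3

variable {E : Type u} [Category.{v} E] {Φ : Coglob E} {GS : GSums Φ} {X : Eᵒᵖ ⥤ Type w}

lemma pairUp_cond (hm : GS.IsModel X) {j k : ℕ} (u v : arr (Φ := Φ) X (j + k + 1))
    (hc : Composable j k u v) :
    X.map (Φ.σUp j (k + 1)).op u =
      X.map (Φ.τUp j (k + 1) ≫ GS.ι (GTable.single (j + k + 1))).op
        (X.map (eqToHom (GS.single_eq (j + k + 1))).op v) := by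
  erw [mapmap, Category.assoc, GS.ι_single, eqToHom_trans, eqToHom_refl, Category.comp_id]
  exact hc

lemma pairUp_spec (hm : GS.IsModel X) {j k : ℕ} (u v : arr (Φ := Φ) X (j + k + 1))
    (hc : Composable j k u v) :
    X.map (GS.ε₁ j k).op (pairUp hm u v hc) = u ∧
    X.map (GS.ρ (GTable.single (j + k + 1))).op (pairUp hm u v hc) =
      X.map (eqToHom (GS.single_eq (j + k + 1))).op v :=
  (hm (GTable.single (j + k + 1)) u (X.map (eqToHom (GS.single_eq (j + k + 1))).op v)
    (pairUp_cond hm u v hc)).exists.choose_spec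

lemma pairUp_ε₁ (hm : GS.IsModel X) {j k : ℕ} (u v : arr (Φ := Φ) X (j + k + 1))
    (hc : Composable j k u v) :
    X.map (GS.ε₁ j k).op (pairUp hm u v hc) = u := (pairUp_spec hm u v hc).1

lemma pairUp_ε₂ (hm : GS.IsModel X) {j k : ℕ} (u v : arr (Φ := Φ) X (j + k + 1))
    (hc : Composable j k u v) :
    X.map (GS.ε₂ j k).op (pairUp hm u v hc) = v := by
  have h := (pairUp_spec hm u v hc).2
  unfold GSums.ε₂
  erw [← mapmap, h, mapmap, eqToHom_trans, eqToHom_refl, map_one']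

lemma pairUp_eq_map (hm : GS.IsModel X) {j k : ℕ} {u v : arr (Φ := Φ) X (j + k + 1)}
    (hc : Composable j k u v) {Y : E} (ψ : GS.S (GSums.Btab j k) ⟶ Y)
    (w : X.obj (op Y)) (h1 : X.map (GS.ε₁ j k ≫ ψ).op w = u)
    (h2 : X.map (GS.ε₂ j k ≫ ψ).op w = v) :
    pairUp hm u v hc = X.map ψ.op w := by
  refine (hm (GTable.single (j + k + 1)) u (X.map (eqToHom (GS.single_eq (j + k + 1))).op v)
    (pairUp_cond hm u v hc)).unique ⟨(pairUp_spec hm u v hc).1, (pairUp_spec hm u v hc).2⟩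
    ⟨?_, ?_⟩
  · erw [mapmap]; exact h1
  · erw [mapmap]
    rw [← h2, mapmap]
    have he : eqToHom (GS.single_eq (j + k + 1)) ≫ GS.ε₂ j k ≫ ψ =
        GS.ρ (GTable.single (j + k + 1)) ≫ ψ := by
      unfold GSums.ε₂
      erw [← Category.assoc, ← Category.assoc, eqToHom_trans, eqToHom_refl, Category.id_comp]
      rfl
    rw [he]

lemma gcomp_eq (hm : GS.IsModel X) (P : Pregroupoidal GS) {j k : ℕ}
    {u v : arr (Φ := Φ) X (j + k + 1)} (hc : Composable j k u v) :
    gcomp hm P j k u v = X.map (P.nabla j k).op (pairUp hm u v hc) := by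
  unfold gcomp
  erw [dif_pos hc]

end Aux3
section Aux4

variable {E : Type u} [Category.{v} E] {Φ : Coglob E} {GS : GSums Φ} {X : Eᵒᵖ ⥤ Type w}

lemma composable_iff {j : ℕ} (u v : arr (Φ := Φ) X (j + 1)) :
    Composable j 0 u v ↔ asrc u = atgt v := by
  unfold Composable asrc atgt
  rw [σUp_one, τUp_one]
  exact Iff.rfl

lemma gcomp_src (hm : GS.IsModel X) (P : Pregroupoidal GS) {j : ℕ}
    {u v : arr (Φ := Φ) X (j + 1)} (hc : Composable j 0 u v) :
    asrc (gcomp hm P j 0 u v) = asrc v := by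
  unfold asrc
  rw [gcomp_eq hm P hc, mapmap, P.nabla_σ₀, ← mapmap, pairUp_ε₂]

lemma gcomp_tgt (hm : GS.IsModel X) (P : Pregroupoidal GS) {j : ℕ}
    {u v : arr (Φ := Φ) X (j + 1)} (hc : Composable j 0 u v) :
    atgt (gcomp hm P j 0 u v) = atgt u := by
  unfold atgt
  rw [gcomp_eq hm P hc, mapmap, P.nabla_τ₀, ← mapmap, pairUp_ε₁]

lemma asrc_gunit (P : Pregroupoidal GS) {n : ℕ} (x : arr (Φ := Φ) X n) :
    asrc (gunit P x) = x := by
  unfold asrc gunit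
  erw [mapmap, P.kappa_σ, map_one']

lemma atgt_gunit (P : Pregroupoidal GS) {n : ℕ} (x : arr (Φ := Φ) X n) :
    atgt (gunit P x) = x := by
  unfold atgt gunit
  erw [mapmap, P.kappa_τ, map_one']

lemma gunit_asrc (P : Pregroupoidal GS) {n : ℕ} (u : arr (Φ := Φ) X (n + 1)) :
    gunit P (asrc u) = X.map (P.kappa n ≫ Φ.σ n).op u := by
  unfold asrc gunit; erw [mapmap]

lemma gunit_atgt (P : Pregroupoidal GS) {n : ℕ} (u : arr (Φ := Φ) X (n + 1)) :
    gunit P (atgt u) = X.map (P.kappa n ≫ Φ.τ n).op u := by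
  unfold atgt gunit; erw [mapmap]

lemma asrc_gwinv (P : Pregroupoidal GS) {j : ℕ} (u : arr (Φ := Φ) X (j + 1)) :
    asrc (gwinv P j 0 u) = atgt u := by
  unfold asrc atgt gwinv
  erw [mapmap, P.winv_σ₀]

lemma atgt_gwinv (P : Pregroupoidal GS) {j : ℕ} (u : arr (Φ := Φ) X (j + 1)) :
    atgt (gwinv P j 0 u) = asrc u := by
  unfold asrc atgt gwinv
  erw [mapmap, P.winv_τ₀]

lemma asrc_asrc {n : ℕ} (h : arr (Φ := Φ) X (n + 2)) :
    asrc (asrc h) = asrc (atgt h) := by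
  unfold asrc atgt
  erw [mapmap, mapmap, Φ.relσ]

lemma atgt_atgt {n : ℕ} (h : arr (Φ := Φ) X (n + 2)) :
    atgt (asrc h) = atgt (atgt h) := by
  unfold asrc atgt
  erw [mapmap, mapmap, Φ.relτ]

lemma GSums.ε₁_amalgMap (j k : ℕ) (f : Φ.D (j + k + 1) ⟶ Φ.D (j + k + 2)) (hσ hτ) :
    GS.ε₁ j k ≫ GS.amalgMap j k f hσ hτ = f ≫ GS.ε₁ j (k + 1) :=
  GS.ι_desc _ _ _ _

lemma GSums.ε₂_amalgMap (j k : ℕ) (f : Φ.D (j + k + 1) ⟶ Φ.D (j + k + 2)) (hσ hτ) :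
    GS.ε₂ j k ≫ GS.amalgMap j k f hσ hτ = f ≫ GS.ε₂ j (k + 1) := by
  unfold GSums.amalgMap
  conv_lhs => rw [GSums.ε₂]
  erw [Category.assoc, GS.ρ_desc]
  simp [GSums.ε₂]

lemma htp_of_maps (hC : GS.Contractible) {n i : ℕ} (T : GTable i) (hdim : T.dim ≤ n + 2)
    (f g : Φ.D (n + 1) ⟶ GS.S T) (hσ : Φ.σ n ≫ f = Φ.σ n ≫ g)
    (hτ : Φ.τ n ≫ f = Φ.τ n ≫ g) (w : X.obj (op (GS.S T))) :
    Htp (Φ := Φ) (X := X) (n + 1) (X.map f.op w) (X.map g.op w) := by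
  obtain ⟨h, h1, h2⟩ := hC (n + 1) T hdim f g ⟨hσ, hτ⟩
  refine ⟨X.map h.op w, ?_, ?_⟩
  · unfold asrc; rw [mapmap, h1]
  · unfold atgt; rw [mapmap, h2]

lemma htp_of_endo (hC : GS.Contractible) {m : ℕ} (f g : Φ.D (m + 1) ⟶ Φ.D (m + 1))
    (hσ : Φ.σ m ≫ f = Φ.σ m ≫ g) (hτ : Φ.τ m ≫ f = Φ.τ m ≫ g)
    (u : arr (Φ := Φ) X (m + 1)) :
    Htp (Φ := Φ) (X := X) (m + 1) (X.map f.op u) (X.map g.op u) := by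
  have e := GS.single_eq (m + 1)
  have key : ∀ f' : Φ.D (m + 1) ⟶ Φ.D (m + 1),
      X.map (f' ≫ eqToHom e.symm).op (X.map (eqToHom e).op u) = X.map f'.op u := by
    intro f'
    erw [mapmap, Category.assoc, eqToHom_trans, eqToHom_refl, Category.comp_id]
  rw [← key f, ← key g]
  refine htp_of_maps hC (GTable.single (m + 1)) ?_ _ _ ?_ ?_ _
  · show m + 1 ≤ m + 2; omega
  · rw [← Category.assoc, ← Category.assoc, hσ]
  · rw [← Category.assoc, ← Category.assoc, hτ]

end Aux4
section Aux5

variable {E : Type u} [Category.{v} E] {Φ : Coglob E} {GS : GSums Φ} {X : Eᵒᵖ ⥤ Type w}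

lemma GSums.ε₁_amalgσ (j k : ℕ) :
    GS.ε₁ j k ≫ GS.amalgσ j k = Φ.σ (j + k + 1) ≫ GS.ε₁ j (k + 1) :=
  GSums.ε₁_amalgMap j k _ _ _

lemma GSums.ε₂_amalgσ (j k : ℕ) :
    GS.ε₂ j k ≫ GS.amalgσ j k = Φ.σ (j + k + 1) ≫ GS.ε₂ j (k + 1) :=
  GSums.ε₂_amalgMap j k _ _ _

lemma GSums.ε₁_amalgτ (j k : ℕ) :
    GS.ε₁ j k ≫ GS.amalgτ j k = Φ.τ (j + k + 1) ≫ GS.ε₁ j (k + 1) :=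
  GSums.ε₁_amalgMap j k _ _ _

lemma GSums.ε₂_amalgτ (j k : ℕ) :
    GS.ε₂ j k ≫ GS.amalgτ j k = Φ.τ (j + k + 1) ≫ GS.ε₂ j (k + 1) :=
  GSums.ε₂_amalgMap j k _ _ _

/-- Main workhorse for units and inverses: if a composable pair is the image of the
pair `(f, g)` of endomorphisms of the `(m+1)`-globe at a single arrow `u`, then its
composite is homotopic to `X.map t.op u` for any `t` suitably parallel. -/
lemma htp_gcomp_of_maps (hC : GS.Contractible) (hm : GS.IsModel X) (P : Pregroupoidal GS)
    {m : ℕ} (f g t : Φ.D (m + 1) ⟶ Φ.D (m + 1))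
    (hfg : Φ.σUp m 1 ≫ f = Φ.τUp m 1 ≫ g)
    (u u₁ u₂ : arr (Φ := Φ) X (m + 1))
    (e1 : u₁ = X.map f.op u) (e2 : u₂ = X.map g.op u)
    (hc : Composable m 0 u₁ u₂)
    (hσ' : Φ.σ m ≫ g = Φ.σ m ≫ t) (hτ' : Φ.τ m ≫ f = Φ.τ m ≫ t) :
    Htp (Φ := Φ) (X := X) (m + 1) (gcomp hm P m 0 u₁ u₂) (X.map t.op u) := by
  subst e1 e2
  have hr1 : GS.ε₁ m 0 ≫ GS.mkFromPair f g hfg = f := GSums.ε₁_mkFromPair (j := m) (k := 0) f g hfg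
  have hr2 : GS.ε₂ m 0 ≫ GS.mkFromPair f g hfg = g := GSums.ε₂_mkFromPair (j := m) (k := 0) f g hfg
  have hpair : pairUp hm _ _ hc = X.map (GS.mkFromPair f g hfg).op u :=
    pairUp_eq_map hm hc _ u (by rw [hr1]) (by rw [hr2])
  have hL : gcomp hm P m 0 (X.map f.op u) (X.map g.op u) =
      X.map (P.nabla m 0 ≫ GS.mkFromPair f g hfg).op u := by
    erw [gcomp_eq hm P hc, hpair, mapmap]
  rw [hL]
  refine htp_of_endo hC _ _ ?_ ?_ u
  · rw [← Category.assoc, P.nabla_σ₀ m, Category.assoc, hr2, hσ']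
  · rw [← Category.assoc, P.nabla_τ₀ m, Category.assoc, hr1, hτ']

end Aux5

theorem Pi_n_groupoid {E : Type u} [Category.{v} E] (Φ : Coglob E) (GS : GSums Φ)
    (hC : GS.Contractible) (X : Eᵒᵖ ⥤ Type w) (hm : GS.IsModel X)
    (P : Pregroupoidal GS) (m : ℕ) :
    -- the homotopy relation on `n`-arrows is an equivalence relation
    Equivalence (Htp (Φ := Φ) (X := X) (m + 1)) ∧
    -- compatibility of `*^n_{n-1}` with homotopy
    (∀ u u' v v' : arr (Φ := Φ) X (m + 1), Composable m 0 u v →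
      Htp (m + 1) u u' → Htp (m + 1) v v' →
      Htp (m + 1) (gcomp hm P m 0 u v) (gcomp hm P m 0 u' v')) ∧
    -- associativity up to homotopy
    (∀ u v z : arr (Φ := Φ) X (m + 1), Composable m 0 u v → Composable m 0 v z →
      Htp (m + 1) (gcomp hm P m 0 (gcomp hm P m 0 u v) z)
        (gcomp hm P m 0 u (gcomp hm P m 0 v z))) ∧
    -- units up to homotopy
    (∀ u : arr (Φ := Φ) X (m + 1),
      Htp (m + 1) (gcomp hm P m 0 u (gunit P (asrc u))) u ∧
      Htp (m + 1) (gcomp hm P m 0 (gunit P (atgt u)) u) u) ∧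
    -- inverses up to homotopy
    (∀ u : arr (Φ := Φ) X (m + 1),
      Htp (m + 1) (gcomp hm P m 0 u (gwinv P m 0 u)) (gunit P (atgt u)) ∧
      Htp (m + 1) (gcomp hm P m 0 (gwinv P m 0 u) u) (gunit P (asrc u))) := by
  refine ⟨⟨?_, ?_, ?_⟩, ?_, ?_, ?_, ?_⟩
  -- reflexivity
  · intro u
    exact ⟨gunit P u, asrc_gunit P u, atgt_gunit P u⟩
  -- symmetry
  · rintro u v ⟨h, h1, h2⟩
    exact ⟨gwinv P (m + 1) 0 h, by rw [asrc_gwinv, h2], by rw [atgt_gwinv, h1]⟩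
  -- transitivity
  · rintro u v z ⟨h, h1, h2⟩ ⟨h', h1', h2'⟩
    have hc : Composable (m + 1) 0 h' h := (composable_iff h' h).2 (by rw [h1', h2])
    exact ⟨gcomp hm P (m + 1) 0 h' h, by rw [gcomp_src hm P hc, h1],
      by rw [gcomp_tgt hm P hc, h2']⟩
  -- compatibility with composition
  · rintro u u' v v' hc ⟨h, h1, h2⟩ ⟨h', h1', h2'⟩
    have hv' : atgt v' = atgt v := by rw [← h2', ← atgt_atgt, h1']
    have hu' : asrc u' = asrc u := by rw [← h2, ← asrc_asrc, h1]
    have hcc : Composable m 1 h h' := by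
      show X.map (Φ.σUp m 2).op h = X.map (Φ.τUp m 2).op h'
      have e1 : Φ.σUp m 2 = Φ.σUp m 1 ≫ Φ.σ (m + 1) := rfl
      have e2 : Φ.τUp m 2 = Φ.τUp m 1 ≫ Φ.τ (m + 1) := rfl
      erw [e1, e2, ← mapmap (Φ.σUp m 1) (Φ.σ (m + 1)), ← mapmap (Φ.τUp m 1) (Φ.τ (m + 1)),
        σUp_one, τUp_one]
      show X.map (Φ.σ m).op (asrc h) = X.map (Φ.τ m).op (atgt h')
      rw [h1, h2']
      show asrc u = atgt v'
      rw [hv']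
      exact (composable_iff u v).1 hc
    have hc' : Composable m 0 u' v' := by
      rw [composable_iff, hu', hv']
      exact (composable_iff u v).1 hc
    refine ⟨gcomp hm P m 1 h h', ?_, ?_⟩
    · show X.map (Φ.σ (m + 1)).op (gcomp hm P m 1 h h') = _
      rw [gcomp_eq hm P hcc, mapmap, P.nabla_σ m 0, ← mapmap]
      have hps : X.map (GS.amalgσ m 0).op (pairUp hm h h' hcc) = pairUp (j := m) (k := 0) hm u v hc := by
        symm
        refine pairUp_eq_map hm hc _ _ ?_ ?_
        · rw [GSums.ε₁_amalgσ m 0, ← mapmap, pairUp_ε₁ hm h h' hcc]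
          exact h1
        · rw [GSums.ε₂_amalgσ m 0, ← mapmap, pairUp_ε₂ hm h h' hcc]
          exact h1'
      rw [hps]
      exact (gcomp_eq hm P hc).symm
    · show X.map (Φ.τ (m + 1)).op (gcomp hm P m 1 h h') = _
      rw [gcomp_eq hm P hcc, mapmap, P.nabla_τ m 0, ← mapmap]
      have hpt : X.map (GS.amalgτ m 0).op (pairUp hm h h' hcc) = pairUp (j := m) (k := 0) hm u' v' hc' := by
        symm
        refine pairUp_eq_map hm hc' _ _ ?_ ?_
        · rw [GSums.ε₁_amalgτ m 0, ← mapmap, pairUp_ε₁ hm h h' hcc]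
          exact h2
        · rw [GSums.ε₂_amalgτ m 0, ← mapmap, pairUp_ε₂ hm h h' hcc]
          exact h2'
      rw [hpt]
      exact (gcomp_eq hm P hc').symm
  -- associativity
  · intro u v z huv hvz
    -- the element of the triple globular sum determined by (u, v, z)
    have hcond : X.map (Φ.σUp m 1).op u =
        X.map (Φ.τUp m 1 ≫ GS.ι (GSums.Btab m 0)).op (pairUp hm v z hvz) := by
      rw [← mapmap]
      show X.map (Φ.σUp m 1).op u =
        X.map (Φ.τUp m 1).op (X.map (GS.ε₁ m 0).op (pairUp hm v z hvz))
      rw [pairUp_ε₁ (j := m) (k := 0) hm v z hvz]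
      exact huv
    obtain ⟨w, ⟨hw1, hw2⟩, -⟩ :=
      hm (j := m) (d := 0) (e := 0) (GSums.Btab m 0) u (pairUp hm v z hvz) hcond
    -- the three auxiliary maps γ, β, α out of the binary globular sum
    have hγglue : Φ.σUp m 1 ≫ GS.ι (GTable.cons m 0 0 (GSums.Btab m 0)) =
        Φ.τUp m 1 ≫ (GS.ε₁ m 0 ≫ GS.ρ (j := m) (d := 0) (e := 0) (GSums.Btab m 0)) := by
      show Φ.σUp m 1 ≫ GS.ι (GTable.cons m 0 0 (GSums.Btab m 0)) =
        Φ.τUp m 1 ≫ GS.ι (GSums.Btab m 0) ≫ GS.ρ (j := m) (d := 0) (e := 0) (GSums.Btab m 0)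
      exact GS.glue (j := m) (d := 0) (e := 0) (GSums.Btab m 0)
    set γ := GS.mkFromPair (j := m) (k := 0) (GS.ι (GTable.cons m 0 0 (GSums.Btab m 0)))
      (GS.ε₁ m 0 ≫ GS.ρ (j := m) (d := 0) (e := 0) (GSums.Btab m 0)) hγglue with hγdef
    have hγ1 : GS.ε₁ m 0 ≫ γ = GS.ι (GTable.cons m 0 0 (GSums.Btab m 0)) :=
      GSums.ε₁_mkFromPair (j := m) (k := 0) _ _ _
    have hγ2 : GS.ε₂ m 0 ≫ γ = GS.ε₁ m 0 ≫ GS.ρ (j := m) (d := 0) (e := 0) (GSums.Btab m 0) :=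
      GSums.ε₂_mkFromPair (j := m) (k := 0) _ _ _
    have hβglue : Φ.σUp m 1 ≫ GS.ι (GTable.cons m 0 0 (GSums.Btab m 0)) =
        Φ.τUp m 1 ≫ (P.nabla m 0 ≫ GS.ρ (j := m) (d := 0) (e := 0) (GSums.Btab m 0)) := by
      rw [hγglue, τUp_one, ← Category.assoc, ← Category.assoc, P.nabla_τ₀ m]
    set β := GS.mkFromPair (j := m) (k := 0) (GS.ι (GTable.cons m 0 0 (GSums.Btab m 0)))
      (P.nabla m 0 ≫ GS.ρ (j := m) (d := 0) (e := 0) (GSums.Btab m 0)) hβglue with hβdef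
    have hβ1 : GS.ε₁ m 0 ≫ β = GS.ι (GTable.cons m 0 0 (GSums.Btab m 0)) :=
      GSums.ε₁_mkFromPair (j := m) (k := 0) _ _ _
    have hβ2 : GS.ε₂ m 0 ≫ β = P.nabla m 0 ≫ GS.ρ (j := m) (d := 0) (e := 0) (GSums.Btab m 0) :=
      GSums.ε₂_mkFromPair (j := m) (k := 0) _ _ _
    have hαglue : Φ.σUp m 1 ≫ (P.nabla m 0 ≫ γ) =
        Φ.τUp m 1 ≫ (GS.ε₂ m 0 ≫ GS.ρ (j := m) (d := 0) (e := 0) (GSums.Btab m 0)) := by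
      rw [σUp_one, ← Category.assoc, P.nabla_σ₀ m, Category.assoc, hγ2,
        ← Category.assoc, ← σUp_one m, ε_glue m 0, Category.assoc]
    set α := GS.mkFromPair (j := m) (k := 0) (P.nabla m 0 ≫ γ)
      (GS.ε₂ m 0 ≫ GS.ρ (j := m) (d := 0) (e := 0) (GSums.Btab m 0)) hαglue with hαdef
    have hα1 : GS.ε₁ m 0 ≫ α = P.nabla m 0 ≫ γ :=
      GSums.ε₁_mkFromPair (j := m) (k := 0) _ _ _
    have hα2 : GS.ε₂ m 0 ≫ α = GS.ε₂ m 0 ≫ GS.ρ (j := m) (d := 0) (e := 0) (GSums.Btab m 0) :=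
      GSums.ε₂_mkFromPair (j := m) (k := 0) _ _ _
    -- composability of the two iterated composites
    have hc1 : Composable m 0 (gcomp hm P m 0 u v) z := by
      rw [composable_iff, gcomp_src hm P huv]
      exact (composable_iff v z).1 hvz
    have hc2 : Composable m 0 u (gcomp hm P m 0 v z) := by
      rw [composable_iff, gcomp_tgt hm P hvz]
      exact (composable_iff u v).1 huv
    -- identification of the pairs with images of w
    have hpuv : pairUp (j := m) (k := 0) hm u v huv = X.map γ.op w := by
      refine pairUp_eq_map hm huv γ w ?_ ?_
      · rw [hγ1]; exact hw1
      · rw [hγ2, ← mapmap, hw2, pairUp_ε₁ (j := m) (k := 0) hm v z hvz]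
    have hguv : gcomp hm P m 0 u v = X.map (P.nabla m 0 ≫ γ).op w := by
      rw [gcomp_eq hm P huv, hpuv, mapmap]
    have hpvzβ : pairUp (j := m) (k := 0) hm u (gcomp hm P m 0 v z) hc2 = X.map β.op w := by
      refine pairUp_eq_map hm hc2 β w ?_ ?_
      · rw [hβ1]; exact hw1
      · rw [hβ2, ← mapmap, hw2, ← gcomp_eq hm P hvz]
    have hRHS : gcomp hm P m 0 u (gcomp hm P m 0 v z) = X.map (P.nabla m 0 ≫ β).op w := by
      rw [gcomp_eq hm P hc2, hpvzβ, mapmap]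
    have hpuvα : pairUp (j := m) (k := 0) hm (gcomp hm P m 0 u v) z hc1 = X.map α.op w := by
      refine pairUp_eq_map hm hc1 α w ?_ ?_
      · rw [hα1]; exact hguv.symm
      · rw [hα2, ← mapmap, hw2, pairUp_ε₂ (j := m) (k := 0) hm v z hvz]
    have hLHS : gcomp hm P m 0 (gcomp hm P m 0 u v) z = X.map (P.nabla m 0 ≫ α).op w := by
      rw [gcomp_eq hm P hc1, hpuvα, mapmap]
    rw [hLHS, hRHS]
    refine htp_of_maps hC (GTable.cons m 0 0 (GSums.Btab m 0)) ?_ _ _ ?_ ?_ w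
    · show GTable.dim _ ≤ m + 2
      simp [GTable.dim, GSums.Btab]
    · -- source-parallelism
      simp only [← Category.assoc]
      rw [P.nabla_σ₀ m]
      simp only [Category.assoc]
      rw [hα2, hβ2]
      simp only [← Category.assoc]
      rw [P.nabla_σ₀ m]
    · -- target-parallelism
      simp only [← Category.assoc]
      rw [P.nabla_τ₀ m]
      simp only [Category.assoc]
      rw [hα1, hβ1]
      simp only [← Category.assoc]
      rw [P.nabla_τ₀ m]
      simp only [Category.assoc]
      rw [hγ1]
  -- units
  · intro u
    constructor
    · have hfg : Φ.σUp m 1 ≫ 𝟙 (Φ.D (m + 1)) = Φ.τUp m 1 ≫ (P.kappa m ≫ Φ.σ m) := by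
        rw [Category.comp_id, σUp_one, τUp_one, ← Category.assoc, P.kappa_τ, Category.id_comp]
      have hc : Composable m 0 u (gunit P (asrc u)) :=
        (composable_iff _ _).2 (atgt_gunit P (asrc u)).symm
      have h := htp_gcomp_of_maps hC hm P (𝟙 _) (P.kappa m ≫ Φ.σ m) (𝟙 _) hfg u
        u (gunit P (asrc u)) (map_one' u).symm (gunit_asrc P u) hc
        (by rw [Category.comp_id, ← Category.assoc, P.kappa_σ, Category.id_comp])
        rfl
      erw [map_one'] at h
      exact h
    · have hfg : Φ.σUp m 1 ≫ (P.kappa m ≫ Φ.τ m) = Φ.τUp m 1 ≫ 𝟙 (Φ.D (m + 1)) := by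
        rw [Category.comp_id, σUp_one, τUp_one, ← Category.assoc, P.kappa_σ, Category.id_comp]
      have hc : Composable m 0 (gunit P (atgt u)) u :=
        (composable_iff _ _).2 (asrc_gunit P (atgt u))
      have h := htp_gcomp_of_maps hC hm P (P.kappa m ≫ Φ.τ m) (𝟙 _) (𝟙 _) hfg u
        (gunit P (atgt u)) u (gunit_atgt P u) (map_one' u).symm hc
        rfl
        (by rw [Category.comp_id, ← Category.assoc, P.kappa_τ, Category.id_comp])
      erw [map_one'] at h
      exact h
  -- inverses
  · intro u
    constructor
    · have hfg : Φ.σUp m 1 ≫ 𝟙 (Φ.D (m + 1)) = Φ.τUp m 1 ≫ P.winv m 0 := by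
        rw [Category.comp_id, σUp_one, τUp_one, P.winv_τ₀]
      have hc : Composable m 0 u (gwinv P m 0 u) :=
        (composable_iff _ _).2 (atgt_gwinv P u).symm
      have h := htp_gcomp_of_maps hC hm P (𝟙 _) (P.winv m 0) (P.kappa m ≫ Φ.τ m) hfg u
        u (gwinv P m 0 u) (map_one' u).symm rfl hc
        (by rw [P.winv_σ₀, ← Category.assoc, P.kappa_σ, Category.id_comp])
        (by rw [Category.comp_id, ← Category.assoc, P.kappa_τ, Category.id_comp])
      rwa [← gunit_atgt] at h
    · have hfg : Φ.σUp m 1 ≫ P.winv m 0 = Φ.τUp m 1 ≫ 𝟙 (Φ.D (m + 1)) := by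
        rw [Category.comp_id, σUp_one, τUp_one, P.winv_σ₀]
      have hc : Composable m 0 (gwinv P m 0 u) u :=
        (composable_iff _ _).2 (asrc_gwinv P u)
      have h := htp_gcomp_of_maps hC hm P (P.winv m 0) (𝟙 _) (P.kappa m ≫ Φ.σ m) hfg u
        (gwinv P m 0 u) u rfl (map_one' u).symm hc
        (by rw [Category.comp_id, ← Category.assoc, P.kappa_σ, Category.id_comp])
        (by rw [P.winv_τ₀, ← Category.assoc, P.kappa_τ, Category.id_comp])
      rwa [← gunit_asrc] at h
end

section
/- Let ℳ be a model category equipped with a functor F : 𝔾 → ℳ from the globe category that is cofibrant (each latching map i_n : S_{n-1} → D_n is a cofibration, where S_{-1} = ∅ and S_{n-1} = D_{n-1} ∐_{S_{n-2}} D_{n-1}) and weakly contractible (each D_n is weakly contractible). Then every globular sum in ℳ (iterated pushout D_{i_1} ∐_{D_{i'_1}} ⋯ ∐_{D_{i'_{n-1}}} D_{i_n} along the maps σ and τ) is weakly contractible. -/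
/-!
STATEMENT 12: Let `ℳ` be a model category equipped with a functor `F : 𝔾 → ℳ` from
the globe category (a coglobular object) that is cofibrant (each latching map
`i_n : S_{n-1} → D_n` is a cofibration) and weakly contractible (each `D_n` is
weakly contractible).  Then every globular sum in `ℳ` (the iterated pushout
associated to a table of dimensions, glued along the maps `σ` and `τ`) is weakly
contractible.
-/

open CategoryTheory Opposite

universe w v u

open CategoryTheory CategoryTheory.Limits

/-- A (Quillen closed) model structure on a category: three classes of morphisms
(weak equivalences, cofibrations, fibrations) satisfying two-out-of-three,
stability under retracts, the lifting axioms and the factorization axioms.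
(Completeness assumptions are imposed separately via `HasFiniteLimits` etc.) -/
structure ModelStr (M : Type u) [Category.{v} M] where
  W : MorphismProperty M
  Cof : MorphismProperty M
  Fib : MorphismProperty M
  w_comp : ∀ {A B C : M} (f : A ⟶ B) (g : B ⟶ C), W f → W g → W (f ≫ g)
  w_cancel_left : ∀ {A B C : M} (f : A ⟶ B) (g : B ⟶ C), W (f ≫ g) → W g → W f
  w_cancel_right : ∀ {A B C : M} (f : A ⟶ B) (g : B ⟶ C), W (f ≫ g) → W f → W g
  retract_stable : ∀ {A B A' B' : M} (f : A ⟶ B) (g : A' ⟶ B')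
    (iA : A ⟶ A') (rA : A' ⟶ A) (iB : B ⟶ B') (rB : B' ⟶ B),
    iA ≫ rA = 𝟙 A → iB ≫ rB = 𝟙 B → iA ≫ g = f ≫ iB → g ≫ rB = rA ≫ f →
    (W g → W f) ∧ (Cof g → Cof f) ∧ (Fib g → Fib f)
  lift_cof_tfib : ∀ {A B X Y : M} (i : A ⟶ B) (p : X ⟶ Y),
    Cof i → Fib p → W p → HasLiftingProperty i p
  lift_tcof_fib : ∀ {A B X Y : M} (i : A ⟶ B) (p : X ⟶ Y),
    Cof i → W i → Fib p → HasLiftingProperty i p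
  fact_cof_tfib : ∀ {A B : M} (f : A ⟶ B),
    ∃ (Z : M) (i : A ⟶ Z) (p : Z ⟶ B), Cof i ∧ Fib p ∧ W p ∧ i ≫ p = f
  fact_tcof_fib : ∀ {A B : M} (f : A ⟶ B),
    ∃ (Z : M) (i : A ⟶ Z) (p : Z ⟶ B), Cof i ∧ W i ∧ Fib p ∧ i ≫ p = f

namespace ModelStr

variable {M : Type u} [Category.{v} M] (ms : ModelStr M)

/-- An object is weakly contractible if `X → *` is a weak equivalence. -/
def WeaklyContractible [HasTerminal M] (X : M) : Prop := ms.W (terminal.from X)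

/-- An object is fibrant if `X → *` is a fibration. -/
def Fibrant [HasTerminal M] (X : M) : Prop := ms.Fib (terminal.from X)

/-- An object is cofibrant if `∅ → X` is a cofibration. -/
def Cofibrant [HasInitial M] (X : M) : Prop := ms.Cof (initial.to X)

end ModelStr

section GlobMC

variable {M : Type u} [Category.{v} M]

/-- The globular sums of a coglobular object in a category with pushouts:
the iterated amalgamated sum associated to a table of dimensions, together with the
inclusion of the first globe. -/
noncomputable def gsumP [HasPushouts M] (Φ : Coglob M) :
    ∀ {i : ℕ}, GTable i → Σ' (S : M), (Φ.D i ⟶ S)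
  | _, .single i => ⟨Φ.D i, 𝟙 _⟩
  | _, .cons j d e T =>
    ⟨pushout (Φ.σUp j (d + 1)) (Φ.τUp j (e + 1) ≫ (gsumP Φ T).2),
      pushout.inl _ _⟩

/-- The spheres `S_{n-1}` of a coglobular object, with the inclusion
`i_n : S_{n-1} ⟶ D_n`: `S_{-1} = ∅` and `S_n = D_n ∐_{S_{n-1}} D_n`,
`i_{n+1} = (τ_{n+1}, σ_{n+1})`. -/
noncomputable def sphereP [HasInitial M] [HasPushouts M] (Φ : Coglob M) :
    ∀ n : ℕ, Σ' (Sob : M) (i : Sob ⟶ Φ.D n), i ≫ Φ.σ n = i ≫ Φ.τ n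
  | 0 => ⟨⊥_ M, initial.to _, initial.hom_ext _ _⟩
  | n + 1 =>
    ⟨pushout (sphereP Φ n).2.1 (sphereP Φ n).2.1,
      pushout.desc (Φ.τ n) (Φ.σ n) (sphereP Φ n).2.2.symm, by
        apply pushout.hom_ext
        · rw [pushout.inl_desc_assoc, pushout.inl_desc_assoc]
          exact Φ.relτ n
        · rw [pushout.inr_desc_assoc, pushout.inr_desc_assoc]
          exact Φ.relσ n⟩

/-- A coglobular object (functor `𝔾 → M`) is cofibrant if each latching morphism
`i_n : S_{n-1} ⟶ D_n` is a cofibration. -/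
def CofibrantCoglob [HasInitial M] [HasPushouts M] (ms : ModelStr M)
    (Φ : Coglob M) : Prop :=
  ∀ n : ℕ, ms.Cof (sphereP Φ n).2.1

/-- A coglobular object is weakly contractible if each globe `D_n` is weakly
contractible. -/
def WeaklyContractibleCoglob [HasTerminal M] (ms : ModelStr M) (Φ : Coglob M) :
    Prop :=
  ∀ n : ℕ, ms.WeaklyContractible (Φ.D n)

end GlobMC

section Aux

variable {M : Type u} [Category.{v} M] (ms : ModelStr M)

/-- Retract argument: a map with the LLP against all trivial fibrations is a
cofibration. -/
lemma ModelStr.cof_of_llp {A B : M} (f : A ⟶ B)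
    (h : ∀ {X Y : M} (p : X ⟶ Y), ms.Fib p → ms.W p → HasLiftingProperty f p) :
    ms.Cof f := by
  obtain ⟨Z, i, p, hi, hp, hwp, hfac⟩ := ms.fact_cof_tfib f
  haveI := h p hp hwp
  have sq : CommSq i f p (𝟙 B) := ⟨by simp [hfac]⟩
  exact ((ms.retract_stable f i (𝟙 A) (𝟙 A) sq.lift p (Category.id_comp _)
    sq.fac_right (by simp [sq.fac_left]) (by simp [hfac])).2.1) hi

/-- Retract argument: a map with the LLP against all fibrations is a trivial
cofibration. -/
lemma ModelStr.tcof_of_llp {A B : M} (f : A ⟶ B)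
    (h : ∀ {X Y : M} (p : X ⟶ Y), ms.Fib p → HasLiftingProperty f p) :
    ms.Cof f ∧ ms.W f := by
  obtain ⟨Z, i, p, hi, hwi, hp, hfac⟩ := ms.fact_tcof_fib f
  haveI := h p hp
  have sq : CommSq i f p (𝟙 B) := ⟨by simp [hfac]⟩
  have := ms.retract_stable f i (𝟙 A) (𝟙 A) sq.lift p (Category.id_comp _)
    sq.fac_right (by simp [sq.fac_left]) (by simp [hfac])
  exact ⟨this.2.1 hi, this.1 hwi⟩

lemma ModelStr.cof_id (A : M) : ms.Cof (𝟙 A) :=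
  ms.cof_of_llp _ fun _ _ _ => inferInstance

lemma ModelStr.cof_comp {A B C : M} {f : A ⟶ B} {g : B ⟶ C}
    (hf : ms.Cof f) (hg : ms.Cof g) : ms.Cof (f ≫ g) := by
  refine ms.cof_of_llp _ fun p hp hwp => ?_
  haveI := ms.lift_cof_tfib f p hf hp hwp
  haveI := ms.lift_cof_tfib g p hg hp hwp
  infer_instance

/-- Lifting property is stable under cobase change. -/
lemma hasLiftingProperty_pushout_inl [HasPushouts M] {A B C X Y : M}
    (f : A ⟶ B) (g : A ⟶ C) (p : X ⟶ Y) [HasLiftingProperty g p] :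
    HasLiftingProperty (pushout.inl f g) p := by
  constructor
  intro u v sq
  have sq' : CommSq (f ≫ u) g p (pushout.inr f g ≫ v) := ⟨by
    rw [Category.assoc, sq.w, ← Category.assoc, pushout.condition, Category.assoc]⟩
  refine ⟨⟨⟨pushout.desc u sq'.lift (by rw [sq'.fac_left]), by rw [pushout.inl_desc], ?_⟩⟩⟩
  apply pushout.hom_ext
  · rw [pushout.inl_desc_assoc, sq.w]
  · rw [pushout.inr_desc_assoc, sq'.fac_right]

lemma ModelStr.cof_pushout_inl [HasPushouts M] {A B C : M}
    (f : A ⟶ B) (g : A ⟶ C) (hg : ms.Cof g) : ms.Cof (pushout.inl f g) := by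
  refine ms.cof_of_llp _ fun p hp hwp => ?_
  haveI := ms.lift_cof_tfib g p hg hp hwp
  exact hasLiftingProperty_pushout_inl f g p

lemma ModelStr.tcof_pushout_inl [HasPushouts M] {A B C : M}
    (f : A ⟶ B) (g : A ⟶ C) (hg : ms.Cof g) (hwg : ms.W g) :
    ms.Cof (pushout.inl f g) ∧ ms.W (pushout.inl f g) := by
  refine ms.tcof_of_llp _ fun p hp => ?_
  haveI := ms.lift_tcof_fib g p hg hwg hp
  exact hasLiftingProperty_pushout_inl f g p

variable [HasInitial M] [HasPushouts M] (Φ : Coglob M)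

lemma cof_τ (hcof : CofibrantCoglob ms Φ) (n : ℕ) : ms.Cof (Φ.τ n) := by
  have : Φ.τ n =
      pushout.inl (sphereP Φ n).2.1 (sphereP Φ n).2.1 ≫ (sphereP Φ (n + 1)).2.1 := by
    simp only [sphereP]; rw [pushout.inl_desc]
  rw [this]
  exact ms.cof_comp (ms.cof_pushout_inl _ _ (hcof n)) (hcof (n + 1))

lemma cof_τUp (hcof : CofibrantCoglob ms Φ) (j k : ℕ) : ms.Cof (Φ.τUp j k) := by
  induction k with
  | zero => exact ms.cof_id _
  | succ k ih => exact ms.cof_comp ih (cof_τ ms Φ hcof (j + k))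

end Aux

theorem globular_sums_weakly_contractible {M : Type u} [Category.{v} M]
    [HasFiniteLimits M] [HasFiniteColimits M] [HasPushouts M]
    (ms : ModelStr M) (Φ : Coglob M)
    (hcof : CofibrantCoglob ms Φ) (hwc : WeaklyContractibleCoglob ms Φ) :
    ∀ {i : ℕ} (T : GTable i), ms.WeaklyContractible (gsumP Φ T).1 := by
  suffices h : ∀ {i : ℕ} (T : GTable i),
      ms.WeaklyContractible (gsumP Φ T).1 ∧ ms.Cof (gsumP Φ T).2 by
    intro i T; exact (h T).1
  intro i T
  induction T with
  | single i => exact ⟨hwc i, ms.cof_id _⟩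
  | cons j d e T ih =>
    set g := Φ.τUp j (e + 1) ≫ (gsumP Φ T).2 with hg
    have hcofg : ms.Cof g := ms.cof_comp (cof_τUp ms Φ hcof j (e + 1)) ih.2
    have hwg : ms.W g := by
      refine ms.w_cancel_left g (terminal.from _) ?_ ih.1
      rw [terminal.comp_from]
      exact hwc j
    obtain ⟨hcofi, hwi⟩ := ms.tcof_pushout_inl (Φ.σUp j (d + 1)) g hcofg hwg
    constructor
    · have : ms.W (pushout.inl (Φ.σUp j (d + 1)) g ≫
          terminal.from (pushout (Φ.σUp j (d + 1)) g)) := by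
        rw [terminal.comp_from]; exact hwc (j + d + 1)
      exact ms.w_cancel_right _ _ this hwi
    · exact hcofi
end

section
/- In any model category ℳ, there exists a cofibrant and weakly contractible functor F : 𝔾 → ℳ: one can construct objects D_n and cofibrations i_n : S_{n-1} → D_n by setting D_0 to be a cofibrant replacement of the terminal object, and for n ≥ 1 factoring the fold map (id, id) : S_{n-1} → D_{n-1} as a cofibration i_n followed by a weak equivalence p_n; setting σ_n = i_n ε_2 and τ_n = i_n ε_1 yields the coglobular relations, each D_n is weakly contractible, and each i_n is a cofibration. -/
/-!
STATEMENT 14: In any model category `ℳ`, there exists a cofibrant and weakly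
contractible functor `F : 𝔾 → ℳ` (a coglobular object such that each latching map
`i_n : S_{n-1} → D_n` is a cofibration and each `D_n` is weakly contractible).
It is constructed by taking `D_0` a cofibrant replacement of the terminal object
and factoring each fold map `(id, id) : S_{n-1} → D_{n-1}` as a cofibration `i_n`
followed by a weak equivalence `p_n`; the coglobular relations hold for
`σ_n = i_n ∘ ε₂`, `τ_n = i_n ∘ ε₁`.
-/

open CategoryTheory Opposite

universe w v u

open CategoryTheory CategoryTheory.Limits

section Construction

variable {M : Type u} [Category.{v} M] [HasFiniteLimits M] [HasFiniteColimits M]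
  [HasPushouts M]

/-- Choice form of the (cofibration, trivial fibration) factorization. -/
noncomputable def MSfact (ms : ModelStr M) {A B : M} (f : A ⟶ B) :
    Σ' (Z : M) (i : A ⟶ Z) (p : Z ⟶ B), ms.Cof i ∧ ms.Fib p ∧ ms.W p ∧ i ≫ p = f :=
  ⟨(ms.fact_cof_tfib f).choose, (ms.fact_cof_tfib f).choose_spec.choose,
   (ms.fact_cof_tfib f).choose_spec.choose_spec.choose,
   (ms.fact_cof_tfib f).choose_spec.choose_spec.choose_spec⟩

/-- The recursive construction: at stage `n` we have the globe `D n`, the sphere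
`S (n-1)` and the latching map `i n : S (n-1) ⟶ D n`, which is a cofibration, with
`D n` weakly contractible. -/
noncomputable def AuxTower (ms : ModelStr M) :
    ∀ _ : ℕ, Σ' (D S : M) (i : S ⟶ D), ms.Cof i ∧ ms.W (terminal.from D)
  | 0 =>
    ⟨(MSfact ms (initial.to (⊤_ M))).1, ⊥_ M, initial.to _, by
      have h1 : initial.to (MSfact ms (initial.to (⊤_ M))).1 =
          (MSfact ms (initial.to (⊤_ M))).2.1 := initial.hom_ext _ _
      have h2 : terminal.from (MSfact ms (initial.to (⊤_ M))).1 =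
          (MSfact ms (initial.to (⊤_ M))).2.2.1 := terminal.hom_ext _ _
      rw [h1, h2]
      exact ⟨(MSfact ms (initial.to (⊤_ M))).2.2.2.1,
        (MSfact ms (initial.to (⊤_ M))).2.2.2.2.2.1⟩⟩
  | n + 1 =>
    let P := AuxTower ms n
    let F := MSfact ms (pushout.desc (𝟙 P.1) (𝟙 P.1) rfl :
      pushout P.2.2.1 P.2.2.1 ⟶ P.1)
    ⟨F.1, pushout P.2.2.1 P.2.2.1, F.2.1, F.2.2.2.1, by
      have h2 : terminal.from F.1 = F.2.2.1 ≫ terminal.from P.1 :=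
        terminal.hom_ext _ _
      rw [h2]
      exact ms.w_comp _ _ F.2.2.2.2.2.1 P.2.2.2.2⟩

variable (ms : ModelStr M)

/-- The globes. -/
noncomputable def AuxD (n : ℕ) : M := (AuxTower ms n).1

/-- The latching cofibrations. -/
noncomputable def AuxI (n : ℕ) : (AuxTower ms n).2.1 ⟶ AuxD ms n :=
  (AuxTower ms n).2.2.1

lemma auxS_succ (n : ℕ) :
    (AuxTower ms (n + 1)).2.1 = pushout (AuxI ms n) (AuxI ms n) := rfl

/-- The cosource maps. -/
noncomputable def Auxσ (n : ℕ) : AuxD ms n ⟶ AuxD ms (n + 1) :=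
  pushout.inr (AuxI ms n) (AuxI ms n) ≫ AuxI ms (n + 1)

/-- The cotarget maps. -/
noncomputable def Auxτ (n : ℕ) : AuxD ms n ⟶ AuxD ms (n + 1) :=
  pushout.inl (AuxI ms n) (AuxI ms n) ≫ AuxI ms (n + 1)

lemma auxI_rel (n : ℕ) : AuxI ms n ≫ Auxσ ms n = AuxI ms n ≫ Auxτ ms n := by
  unfold Auxσ Auxτ
  exact (pushout.condition_assoc _).symm

/-- The coglobular object constructed from the tower. -/
noncomputable def AuxCoglob : Coglob M where
  D := AuxD ms
  σ := Auxσ ms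
  τ := Auxτ ms
  relσ n := by
    unfold Auxσ Auxτ
    exact (Category.assoc _ _ _).trans ((congrArg (pushout.inr _ _ ≫ ·)
      (pushout.condition_assoc _).symm).trans (Category.assoc _ _ _).symm)
  relτ n := by
    unfold Auxσ Auxτ
    exact (Category.assoc _ _ _).trans ((congrArg (pushout.inl _ _ ≫ ·)
      (pushout.condition_assoc _).symm).trans (Category.assoc _ _ _).symm)

lemma psigma_ext (Φ : Coglob M) (n : ℕ) {X : M} {i j : X ⟶ Φ.D n}
    (h : i = j) (hi : i ≫ Φ.σ n = i ≫ Φ.τ n) (hj : j ≫ Φ.σ n = j ≫ Φ.τ n) :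
    (⟨X, i, hi⟩ : Σ' (S : M) (f : S ⟶ Φ.D n), f ≫ Φ.σ n = f ≫ Φ.τ n) =
      ⟨X, j, hj⟩ := by
  subst h; rfl

/-- One step of the sphere construction, as a function of the previous stage. -/
noncomputable def sphereStep (Φ : Coglob M) (n : ℕ)
    (x : Σ' (Sob : M) (i : Sob ⟶ Φ.D n), i ≫ Φ.σ n = i ≫ Φ.τ n) :
    Σ' (Sob : M) (i : Sob ⟶ Φ.D (n + 1)), i ≫ Φ.σ (n + 1) = i ≫ Φ.τ (n + 1) :=
  ⟨pushout x.2.1 x.2.1, pushout.desc (Φ.τ n) (Φ.σ n) x.2.2.symm, by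
    apply pushout.hom_ext
    · rw [pushout.inl_desc_assoc, pushout.inl_desc_assoc]
      exact Φ.relτ n
    · rw [pushout.inr_desc_assoc, pushout.inr_desc_assoc]
      exact Φ.relσ n⟩

lemma sphereP_succ (Φ : Coglob M) (n : ℕ) :
    sphereP Φ (n + 1) = sphereStep Φ n (sphereP Φ n) := rfl

lemma sphereP_auxCoglob (n : ℕ) :
    sphereP (AuxCoglob ms) n = ⟨(AuxTower ms n).2.1, AuxI ms n, auxI_rel ms n⟩ := by
  induction n with
  | zero =>
    refine Eq.trans (b := ⟨⊥_ M, initial.to _, initial.hom_ext _ _⟩) rfl ?_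
    exact psigma_ext (AuxCoglob ms) 0 (initial.hom_ext _ _) _ _
  | succ n ih =>
    rw [sphereP_succ, ih]
    refine Eq.trans (b := ⟨pushout (AuxI ms n) (AuxI ms n),
      pushout.desc (Auxτ ms n) (Auxσ ms n) (auxI_rel ms n).symm, ?_⟩) rfl ?_
    refine psigma_ext (AuxCoglob ms) (n + 1) ?_ _ _
    apply pushout.hom_ext
    · exact pushout.inl_desc ..
    · exact pushout.inr_desc ..
    apply pushout.hom_ext
    · exact (pushout.inl_desc_assoc ..).trans (((AuxCoglob ms).relτ n).trans
        (pushout.inl_desc_assoc ..).symm)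
    · exact (pushout.inr_desc_assoc ..).trans (((AuxCoglob ms).relσ n).trans
        (pushout.inr_desc_assoc ..).symm)

end Construction

theorem exists_cofibrant_weakly_contractible_coglob {M : Type u}
    [Category.{v} M] [HasFiniteLimits M] [HasFiniteColimits M] [HasPushouts M]
    (ms : ModelStr M) :
    ∃ Φ : Coglob M, CofibrantCoglob ms Φ ∧ WeaklyContractibleCoglob ms Φ := by
  refine ⟨AuxCoglob ms, fun n => ?_, fun n => ?_⟩
  · rw [sphereP_auxCoglob ms n]
    exact (AuxTower ms n).2.2.2.1
  · exact (AuxTower ms n).2.2.2.2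
end

section
/- Let ℳ be a model category in which every object is fibrant, and (X, x : D_0 → X) a based object (D_0 cofibrant and weakly contractible). Let P be a path object of X whose first map r : X → P is a cofibration, and Ω_x X = P ×_{X×X} D_0 the loop object (pullback of (p_1,p_0) : P → X×X along (x,x) : D_0 → X×X). Then there is a canonical bijection π_1(X, x) ≅ [D_0, Ω_x X] = π_0(Ω_x X), natural in (X, x). -/
/-!
STATEMENT 16: Let `ℳ` be a model category in which every object is fibrant and
`(X, x : D₀ → X)` a based object (`D₀` cofibrant and weakly contractible).  Let `P`
be a path object of `X` whose first map `r : X → P` is a cofibration, and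
`Ω_x X = P ×_{X×X} D₀` the loop object.  Then there is a bijection
`π₁(X, x) ≅ [D₀, Ω_x X] = π₀(Ω_x X)`, where `π₁(X, x)` is the set of left
homotopies from `x` to `x` up to left 2-homotopy, and `[D₀, Ω_x X]` is the set of
homotopy classes of maps `D₀ ⟶ Ω_x X`.
-/

open CategoryTheory Opposite

universe w v u

open CategoryTheory CategoryTheory.Limits

open CategoryTheory CategoryTheory.Limits

/-- A cylinder object for `A`: a factorization `A ∐ A ⟶ C ⟶ A` of the codiagonal
as a cofibration followed by a weak equivalence. -/
structure Cyl {M : Type u} [Category.{v} M] [HasBinaryCoproducts M]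
    (ms : ModelStr M) (A : M) where
  C : M
  ii : A ⨿ A ⟶ C
  s : C ⟶ A
  cof : ms.Cof ii
  weq : ms.W s
  fact : ii ≫ s = coprod.desc (𝟙 A) (𝟙 A)

/-- A left homotopy from `f` to `g` (through some cylinder object): a morphism
`h : C ⟶ B` with `h ∘ i₀ = f` and `h ∘ i₁ = g`, i.e. `h ∘ (i₁, i₀) = (g, f)`. -/
structure LeftHtpy {M : Type u} [Category.{v} M] [HasBinaryCoproducts M]
    (ms : ModelStr M) {A B : M} (f g : A ⟶ B) where
  cyl : Cyl ms A
  h : cyl.C ⟶ B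
  ends : cyl.ii ≫ h = coprod.desc g f

/-- Left 2-homotopy between two left homotopies from `f` to `g`: a map `H : D ⟶ B`
on a 2-cylinder object `D` (a factorization of `(s', s) : C' ∐_{A ∐ A} C ⟶ A` as a
cofibration followed by a weak equivalence) restricting to the two homotopies. -/
def TwoHtp {M : Type u} [Category.{v} M] [HasBinaryCoproducts M] [HasPushouts M]
    (ms : ModelStr M) {A B : M} {f g : A ⟶ B}
    (h₁ h₂ : LeftHtpy ms f g) : Prop :=
  ∃ (Dd : M) (kk : pushout h₁.cyl.ii h₂.cyl.ii ⟶ Dd) (t : Dd ⟶ A),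
    ms.Cof kk ∧ ms.W t ∧
    kk ≫ t = pushout.desc h₁.cyl.s h₂.cyl.s (by rw [h₁.cyl.fact, h₂.cyl.fact]) ∧
    ∃ H : Dd ⟶ B,
      pushout.inl _ _ ≫ kk ≫ H = h₁.h ∧ pushout.inr _ _ ≫ kk ≫ H = h₂.h

/-- The set `π₁(A, B; f, g)` : left homotopies from `f` to `g` up to left
2-homotopy. -/
def Pi1Set {M : Type u} [Category.{v} M] [HasBinaryCoproducts M] [HasPushouts M]
    (ms : ModelStr M) {A B : M} (f g : A ⟶ B) : Type _ :=
  Quot (TwoHtp ms (f := f) (g := g))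

/-- Left-homotopy of morphisms `A ⟶ B` (through some cylinder object of `A`). -/
def MapHtpRel {M : Type u} [Category.{v} M] [HasBinaryCoproducts M]
    (ms : ModelStr M) {A B : M} (u v : A ⟶ B) : Prop :=
  ∃ (cy : Cyl ms A) (H : cy.C ⟶ B), cy.ii ≫ H = coprod.desc v u

namespace St16

open CategoryTheory CategoryTheory.Limits

section Infra

variable {M : Type u} [Category.{v} M] (ms : ModelStr M)

/-- Lifts on the right against all cofibrations (like a trivial fibration). -/
def TFibLike {E F : M} (f : E ⟶ F) : Prop :=
  ∀ ⦃A B : M⦄ (i : A ⟶ B), ms.Cof i → HasLiftingProperty i f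

/-- Lifts on the right against all trivial cofibrations (like a fibration). -/
def FibLike {E F : M} (f : E ⟶ F) : Prop :=
  ∀ ⦃A B : M⦄ (i : A ⟶ B), ms.Cof i → ms.W i → HasLiftingProperty i f

/-- Lifts on the left against all trivial fibrations (like a cofibration). -/
def CofLike {A B : M} (f : A ⟶ B) : Prop :=
  ∀ ⦃E F : M⦄ (q : E ⟶ F), ms.Fib q → ms.W q → HasLiftingProperty f q

variable {ms}

lemma w_id (A : M) : ms.W (𝟙 A) := by
  obtain ⟨Z, i, q, hic, hiw, hqf, hfac⟩ := ms.fact_tcof_fib (𝟙 A)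
  exact (ms.retract_stable (𝟙 A) i (𝟙 A) (𝟙 A) i q (by simp) hfac (by simp)
    (by simp [hfac])).1 hiw

lemma w_sect {A B : M} {s : A ⟶ B} {t : B ⟶ A} (h : s ≫ t = 𝟙 A) (hs : ms.W s) : ms.W t :=
  ms.w_cancel_right s t (by rw [h]; exact w_id A) hs

lemma w_retr {A B : M} {s : A ⟶ B} {t : B ⟶ A} (h : s ≫ t = 𝟙 A) (ht : ms.W t) : ms.W s :=
  ms.w_cancel_left s t (by rw [h]; exact w_id A) ht

lemma hlp_pullback {A B P' X' Y' Z' : M} {i : A ⟶ B} {fst : P' ⟶ X'} {snd : P' ⟶ Y'}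
    {f : X' ⟶ Z'} {g : Y' ⟶ Z'} (sq : IsPullback fst snd f g)
    (hlift : HasLiftingProperty i g) : HasLiftingProperty i fst := by
  constructor
  intro u v sq0
  haveI := hlift
  have sq1 : CommSq (u ≫ snd) i g (v ≫ f) :=
    ⟨by rw [Category.assoc, ← sq.w, ← Category.assoc, sq0.w, Category.assoc]⟩
  exact CommSq.HasLift.mk'
    { l := sq.lift v sq1.lift (by rw [sq1.fac_right])
      fac_left := by
        apply sq.hom_ext
        · rw [Category.assoc, sq.lift_fst, sq0.w]
        · rw [Category.assoc, sq.lift_snd, sq1.fac_left]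
      fac_right := sq.lift_fst _ _ _ }

lemma hlp_pushout {X' Y' Z' P' E F : M} {f : X' ⟶ Y'} {g : X' ⟶ Z'} {inl : Y' ⟶ P'}
    {inr : Z' ⟶ P'} (sq : IsPushout f g inl inr) {q : E ⟶ F}
    (hlift : HasLiftingProperty f q) : HasLiftingProperty inr q := by
  constructor
  intro u v sq0
  haveI := hlift
  have sq1 : CommSq (g ≫ u) f q (inl ≫ v) :=
    ⟨by rw [Category.assoc, sq0.w, ← Category.assoc, ← sq.w, Category.assoc]⟩
  exact CommSq.HasLift.mk'
    { l := sq.desc sq1.lift u sq1.fac_left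
      fac_left := sq.inr_desc _ _ _
      fac_right := by
        apply sq.hom_ext
        · rw [sq.inl_desc_assoc, sq1.fac_right]
        · rw [sq.inr_desc_assoc, sq0.w] }

lemma cof_of_coflike {A B : M} (f : A ⟶ B) (h : CofLike ms f) : ms.Cof f := by
  obtain ⟨Z, i, q, hic, hqf, hqw, hfac⟩ := ms.fact_cof_tfib f
  haveI := h q hqf hqw
  have sq : CommSq i f q (𝟙 B) := ⟨by simp [hfac]⟩
  exact (ms.retract_stable f i (𝟙 A) (𝟙 A) sq.lift q (by simp) sq.fac_right
    (by simp [sq.fac_left]) (by simp [hfac])).2.1 hic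

lemma fib_of_fiblike {E F : M} (f : E ⟶ F) (h : FibLike ms f) : ms.Fib f := by
  obtain ⟨Z, i, q, hic, hiw, hqf, hfac⟩ := ms.fact_tcof_fib f
  haveI := h i hic hiw
  have sq : CommSq (𝟙 E) i f q := ⟨by simp [hfac]⟩
  exact (ms.retract_stable f q i sq.lift (𝟙 F) (𝟙 F) sq.fac_left (by simp)
    (by simp [hfac]) (by simp [sq.fac_right])).2.2 hqf

lemma coflike_of_cof {A B : M} {f : A ⟶ B} (hc : ms.Cof f) : CofLike ms f :=
  fun _ _ q hqf hqw => ms.lift_cof_tfib _ _ hc hqf hqw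

lemma fiblike_of_fib {E F : M} {f : E ⟶ F} (hf : ms.Fib f) : FibLike ms f :=
  fun _ _ i hic hiw => ms.lift_tcof_fib _ _ hic hiw hf

lemma tfiblike_of_tfib {E F : M} {f : E ⟶ F} (hf : ms.Fib f) (hw : ms.W f) : TFibLike ms f :=
  fun _ _ i hic => ms.lift_cof_tfib _ _ hic hf hw

lemma fiblike_of_tfiblike {E F : M} {f : E ⟶ F} (h : TFibLike ms f) : FibLike ms f :=
  fun _ _ i hic _ => h i hic

lemma coflike_comp {A B C' : M} {f : A ⟶ B} {g : B ⟶ C'} (h1 : CofLike ms f)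
    (h2 : CofLike ms g) : CofLike ms (f ≫ g) := fun _ _ q hqf hqw => by
  haveI := h1 q hqf hqw
  haveI := h2 q hqf hqw
  infer_instance

lemma tfiblike_comp {A B C' : M} {f : A ⟶ B} {g : B ⟶ C'} (h1 : TFibLike ms f)
    (h2 : TFibLike ms g) : TFibLike ms (f ≫ g) := fun _ _ i hic => by
  haveI := h1 i hic
  haveI := h2 i hic
  infer_instance

lemma fiblike_comp {A B C' : M} {f : A ⟶ B} {g : B ⟶ C'} (h1 : FibLike ms f)
    (h2 : FibLike ms g) : FibLike ms (f ≫ g) := fun _ _ i hic hiw => by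
  haveI := h1 i hic hiw
  haveI := h2 i hic hiw
  infer_instance

lemma coflike_pushout {X' Y' Z' P' : M} {f : X' ⟶ Y'} {g : X' ⟶ Z'} {inl : Y' ⟶ P'}
    {inr : Z' ⟶ P'} (sq : IsPushout f g inl inr) (h : CofLike ms f) : CofLike ms inr :=
  fun _ _ q hqf hqw => hlp_pushout sq (h q hqf hqw)

lemma tfiblike_pullback {P' X' Y' Z' : M} {fst : P' ⟶ X'} {snd : P' ⟶ Y'} {f : X' ⟶ Z'}
    {g : Y' ⟶ Z'} (sq : IsPullback fst snd f g) (h : TFibLike ms g) : TFibLike ms fst :=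
  fun _ _ i hic => hlp_pullback sq (h i hic)

lemma fiblike_pullback {P' X' Y' Z' : M} {fst : P' ⟶ X'} {snd : P' ⟶ Y'} {f : X' ⟶ Z'}
    {g : Y' ⟶ Z'} (sq : IsPullback fst snd f g) (h : FibLike ms g) : FibLike ms fst :=
  fun _ _ i hic hiw => hlp_pullback sq (h i hic hiw)

variable [HasBinaryCoproducts M]

/-- end computations for cylinders -/
lemma cyl_i1_s {A : M} (cy : Cyl ms A) : (coprod.inl ≫ cy.ii) ≫ cy.s = 𝟙 A := by
  rw [Category.assoc, cy.fact, coprod.inl_desc]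

lemma cyl_i0_s {A : M} (cy : Cyl ms A) : (coprod.inr ≫ cy.ii) ≫ cy.s = 𝟙 A := by
  rw [Category.assoc, cy.fact, coprod.inr_desc]

lemma lh_i1 {A B : M} {f g : A ⟶ B} (h : LeftHtpy ms f g) :
    (coprod.inl ≫ h.cyl.ii) ≫ h.h = g := by
  rw [Category.assoc, h.ends, coprod.inl_desc]

lemma lh_i0 {A B : M} {f g : A ⟶ B} (h : LeftHtpy ms f g) :
    (coprod.inr ≫ h.cyl.ii) ≫ h.h = f := by
  rw [Category.assoc, h.ends, coprod.inr_desc]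

end Infra

end St16


namespace St16

open CategoryTheory CategoryTheory.Limits

section PLike

open CategoryTheory CategoryTheory.Limits

variable {M : Type u} [Category.{v} M]

/-- A "path-like" object for `Z`: two endpoint evaluations which lift on the right
against all cofibrations, and a common section. -/
structure PL (ms : ModelStr M) (Z : M) where
  E : M
  d₁ : E ⟶ Z
  d₂ : E ⟶ Z
  j : Z ⟶ E
  hj₁ : j ≫ d₁ = 𝟙 Z
  hj₂ : j ≫ d₂ = 𝟙 Z
  l₁ : TFibLike ms d₁
  l₂ : TFibLike ms d₂

variable {ms : ModelStr M} {Z : M}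

/-- right homotopy through a path-like object -/
def PL.R (pl : PL ms Z) {W : M} (a b : W ⟶ Z) : Prop :=
  ∃ N : W ⟶ pl.E, N ≫ pl.d₁ = a ∧ N ≫ pl.d₂ = b

/-- reversal of a path-like object -/
def PL.rev (pl : PL ms Z) : PL ms Z :=
  ⟨pl.E, pl.d₂, pl.d₁, pl.j, pl.hj₂, pl.hj₁, pl.l₂, pl.l₁⟩

lemma PL.rev_r (pl : PL ms Z) {W : M} {a b : W ⟶ Z} (h : pl.R a b) : pl.rev.R b a := by
  obtain ⟨N, h1, h2⟩ := h
  exact ⟨N, h2, h1⟩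

/-- composition of path-like objects -/
noncomputable def PL.comp [HasPullbacks M] (pl₁ pl₂ : PL ms Z) : PL ms Z where
  E := pullback pl₁.d₂ pl₂.d₁
  d₁ := pullback.fst _ _ ≫ pl₁.d₁
  d₂ := pullback.snd _ _ ≫ pl₂.d₂
  j := pullback.lift pl₁.j pl₂.j (by rw [pl₁.hj₂, pl₂.hj₁])
  hj₁ := by rw [← Category.assoc, pullback.lift_fst, pl₁.hj₁]
  hj₂ := by rw [← Category.assoc, pullback.lift_snd, pl₂.hj₂]
  l₁ := tfiblike_comp
    (tfiblike_pullback (IsPullback.of_hasPullback pl₁.d₂ pl₂.d₁) pl₂.l₁) pl₁.l₁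
  l₂ := tfiblike_comp
    (tfiblike_pullback (IsPullback.of_hasPullback pl₁.d₂ pl₂.d₁).flip pl₁.l₂) pl₂.l₂

lemma PL.comp_r [HasPullbacks M] (pl₁ pl₂ : PL ms Z) {W : M} {a b c : W ⟶ Z}
    (h₁ : pl₁.R a b) (h₂ : pl₂.R b c) : (pl₁.comp pl₂).R a c := by
  obtain ⟨N₁, h11, h12⟩ := h₁
  obtain ⟨N₂, h21, h22⟩ := h₂
  refine ⟨(pullback.lift N₁ N₂ (by rw [h12, h21]) : W ⟶ pullback pl₁.d₂ pl₂.d₁), ?_, ?_⟩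
  · show pullback.lift N₁ N₂ _ ≫ pullback.fst _ _ ≫ pl₁.d₁ = a
    rw [← Category.assoc, pullback.lift_fst, h11]
  · show pullback.lift N₁ N₂ _ ≫ pullback.snd _ _ ≫ pl₂.d₂ = c
    rw [← Category.assoc, pullback.lift_snd, h22]

end PLike

/-- All the fixed data for the proof: the model structure, the based object,
the path object of `X`, together with chosen cylinder/path objects. -/
structure Ctx (M : Type u) [Category.{v} M] [HasFiniteLimits M] [HasFiniteColimits M]
    [HasBinaryCoproducts M] [HasPushouts M] [HasBinaryProducts M] [HasPullbacks M] where
  ms : ModelStr M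
  hfib : ∀ Z : M, ms.Fibrant Z
  D0 : M
  hD0cof : ms.Cofibrant D0
  hD0wc : ms.WeaklyContractible D0
  X : M
  x : D0 ⟶ X
  P : M
  r : X ⟶ P
  p : P ⟶ X ⨯ X
  hrW : ms.W r
  hpFib : ms.Fib p
  hfact : r ≫ p = prod.lift (𝟙 X) (𝟙 X)
  /-- a chosen cylinder object for `D0` -/
  cy0 : Cyl ms D0
  /-- a chosen fibrewise path object for `P` over `X × X` -/
  PI : M
  jP : P ⟶ PI
  qP : PI ⟶ pullback p p
  hjPc : ms.Cof jP
  hjPw : ms.W jP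
  hqPf : ms.Fib qP
  hjq : jP ≫ qP = pullback.lift (𝟙 P) (𝟙 P) rfl
  /-- a chosen path object for the loop object `Ω = P ×_{X×X} D0` -/
  OJ : M
  jO : pullback p (prod.lift x x) ⟶ OJ
  pO : OJ ⟶ pullback p (prod.lift x x) ⨯ pullback p (prod.lift x x)
  hjOc : ms.Cof jO
  hjOw : ms.W jO
  hpOf : ms.Fib pO
  hjpO : jO ≫ pO = prod.lift (𝟙 _) (𝟙 _)

namespace Ctx

variable {M : Type u} [Category.{v} M] [HasFiniteLimits M] [HasFiniteColimits M]
    [HasBinaryCoproducts M] [HasPushouts M] [HasBinaryProducts M] [HasPullbacks M]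
    (c : Ctx M)

/-- the basepoint pair `(x, x) : D0 ⟶ X × X` -/
noncomputable abbrev xx : c.D0 ⟶ c.X ⨯ c.X := prod.lift c.x c.x

/-- the loop object -/
noncomputable abbrev Om : M := pullback c.p c.xx

noncomputable abbrev fstO : c.Om ⟶ c.P := pullback.fst c.p c.xx

noncomputable abbrev sndO : c.Om ⟶ c.D0 := pullback.snd c.p c.xx

noncomputable abbrev e₁ : c.PI ⟶ c.P := c.qP ≫ pullback.fst c.p c.p

noncomputable abbrev e₂ : c.PI ⟶ c.P := c.qP ≫ pullback.snd c.p c.p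

lemma jP_e₁ : c.jP ≫ c.e₁ = 𝟙 c.P := by
  rw [← Category.assoc, c.hjq, pullback.lift_fst]

lemma jP_e₂ : c.jP ≫ c.e₂ = 𝟙 c.P := by
  rw [← Category.assoc, c.hjq, pullback.lift_snd]

lemma e₁_p : c.e₁ ≫ c.p = c.e₂ ≫ c.p := by
  rw [Category.assoc, Category.assoc, pullback.condition]

lemma w_e₁ : c.ms.W c.e₁ := w_sect c.jP_e₁ c.hjPw

lemma w_e₂ : c.ms.W c.e₂ := w_sect c.jP_e₂ c.hjPw

lemma fib_e₁ : c.ms.Fib c.e₁ :=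
  fib_of_fiblike _ (fiblike_comp (fiblike_of_fib c.hqPf)
    (fiblike_pullback (IsPullback.of_hasPullback c.p c.p) (fiblike_of_fib c.hpFib)))

lemma fib_e₂ : c.ms.Fib c.e₂ :=
  fib_of_fiblike _ (fiblike_comp (fiblike_of_fib c.hqPf)
    (fiblike_pullback (IsPullback.of_hasPullback c.p c.p).flip (fiblike_of_fib c.hpFib)))

lemma tf_e₁ : TFibLike c.ms c.e₁ := tfiblike_of_tfib c.fib_e₁ c.w_e₁

lemma tf_e₂ : TFibLike c.ms c.e₂ := tfiblike_of_tfib c.fib_e₂ c.w_e₂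

lemma fiblike_prodfst (Z Z' : M) : FibLike c.ms (prod.fst : Z ⨯ Z' ⟶ Z) :=
  fiblike_pullback (IsPullback.of_hasBinaryProduct' (C := M) (X := Z) (Y := Z'))
    (fun _ _ i hic hiw => c.ms.lift_tcof_fib _ _ hic hiw (c.hfib Z'))

lemma w_pfst : c.ms.W (c.p ≫ prod.fst) :=
  w_sect (s := c.r) (by rw [← Category.assoc, c.hfact, prod.lift_fst]) c.hrW

lemma w_psnd : c.ms.W (c.p ≫ prod.snd) :=
  w_sect (s := c.r) (by rw [← Category.assoc, c.hfact, prod.lift_snd]) c.hrW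

lemma fib_pfst : c.ms.Fib (c.p ≫ prod.fst) :=
  fib_of_fiblike _ (fiblike_comp (fiblike_of_fib c.hpFib) (c.fiblike_prodfst _ _))

lemma tf_pfst : TFibLike c.ms (c.p ≫ prod.fst) := tfiblike_of_tfib c.fib_pfst c.w_pfst

lemma tf_term : TFibLike c.ms (terminal.from c.D0) := tfiblike_of_tfib (c.hfib _) c.hD0wc

lemma coflike_inl : CofLike c.ms (coprod.inl : c.D0 ⟶ c.D0 ⨿ c.D0) :=
  coflike_pushout (IsPushout.of_hasBinaryCoproduct' (C := M) (X := c.D0) (Y := c.D0)).flip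
    (coflike_of_cof c.hD0cof)

lemma coflike_inr : CofLike c.ms (coprod.inr : c.D0 ⟶ c.D0 ⨿ c.D0) :=
  coflike_pushout (IsPushout.of_hasBinaryCoproduct' (C := M) (X := c.D0) (Y := c.D0))
    (coflike_of_cof c.hD0cof)

lemma i1_cof (cy : Cyl c.ms c.D0) : c.ms.Cof (coprod.inl ≫ cy.ii) :=
  cof_of_coflike _ (coflike_comp c.coflike_inl (coflike_of_cof cy.cof))

lemma i0_cof (cy : Cyl c.ms c.D0) : c.ms.Cof (coprod.inr ≫ cy.ii) :=
  cof_of_coflike _ (coflike_comp c.coflike_inr (coflike_of_cof cy.cof))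

lemma i1_w (cy : Cyl c.ms c.D0) : c.ms.W (coprod.inl ≫ cy.ii) :=
  w_retr (cyl_i1_s cy) cy.weq

lemma i0_w (cy : Cyl c.ms c.D0) : c.ms.W (coprod.inr ≫ cy.ii) :=
  w_retr (cyl_i0_s cy) cy.weq

lemma coflike_po_inl {A B B' : M} (f : A ⟶ B) (g : A ⟶ B') (hg : c.ms.Cof g) :
    CofLike c.ms (pushout.inl f g) :=
  coflike_pushout (IsPushout.of_hasPushout f g).flip (coflike_of_cof hg)

lemma coflike_po_inr {A B B' : M} (f : A ⟶ B) (g : A ⟶ B') (hf : c.ms.Cof f) :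
    CofLike c.ms (pushout.inr f g) :=
  coflike_pushout (IsPushout.of_hasPushout f g) (coflike_of_cof hf)

lemma fiblike_sndO : FibLike c.ms c.sndO :=
  fiblike_pullback (IsPullback.of_hasPullback c.p c.xx).flip (fiblike_of_fib c.hpFib)

/-- fibrewise right homotopy of maps `D0 ⟶ P` through the chosen fibrewise path object -/
def RH (K K' : c.D0 ⟶ c.P) : Prop :=
  ∃ N : c.D0 ⟶ c.PI, N ≫ c.e₁ = K ∧ N ≫ c.e₂ = K'

/-- `K` is an endpoint correspondent of the left homotopy `h` -/
def MatchH (h : LeftHtpy c.ms c.x c.x) (K : c.D0 ⟶ c.P) : Prop :=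
  ∃ G : h.cyl.C ⟶ c.P,
    G ≫ c.p = prod.lift (h.cyl.s ≫ c.x) h.h ∧
    (coprod.inl ≫ h.cyl.ii) ≫ G = c.x ≫ c.r ∧
    (coprod.inr ≫ h.cyl.ii) ≫ G = K

lemma MatchH.k_p {c : Ctx M} {h : LeftHtpy c.ms c.x c.x} {K : c.D0 ⟶ c.P}
    (m : c.MatchH h K) : K ≫ c.p = c.xx := by
  obtain ⟨G, hGp, _, hG0⟩ := m
  rw [← hG0, Category.assoc, hGp]
  apply Limits.prod.hom_ext
  · rw [Category.assoc, prod.lift_fst, prod.lift_fst, ← Category.assoc, cyl_i0_s,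
      Category.id_comp]
  · rw [Category.assoc, prod.lift_snd, prod.lift_snd, lh_i0]

lemma rh_refl (K : c.D0 ⟶ c.P) : c.RH K K :=
  ⟨K ≫ c.jP, by rw [Category.assoc, c.jP_e₁, Category.comp_id],
    by rw [Category.assoc, c.jP_e₂, Category.comp_id]⟩

lemma r_p_fst : c.r ≫ c.p ≫ prod.fst = 𝟙 c.X := by
  rw [← Category.assoc, c.hfact, prod.lift_fst]

lemma r_p_snd : c.r ≫ c.p ≫ prod.snd = 𝟙 c.X := by
  rw [← Category.assoc, c.hfact, prod.lift_snd]

/-- Two lifts of the same square with values in `P` over `X × X` are fibrewise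
right homotopic. -/
lemma lift_unique_rh {A' B' : M} {i : A' ⟶ B'} (hic : c.ms.Cof i) (hiw : c.ms.W i)
    {G G' : B' ⟶ c.P} (h1 : i ≫ G = i ≫ G') (h2 : G ≫ c.p = G' ≫ c.p) :
    ∃ Mh : B' ⟶ c.PI, Mh ≫ c.e₁ = G ∧ Mh ≫ c.e₂ = G' := by
  haveI := c.ms.lift_tcof_fib i c.qP hic hiw c.hqPf
  have sq : CommSq (i ≫ G ≫ c.jP) i c.qP (pullback.lift G G' h2) := by
    constructor
    apply pullback.hom_ext
    · simp only [Category.assoc, pullback.lift_fst]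
      rw [c.jP_e₁, Category.comp_id]
    · simp only [Category.assoc, pullback.lift_snd]
      rw [c.jP_e₂, Category.comp_id, h1]
  refine ⟨sq.lift, ?_, ?_⟩
  · show sq.lift ≫ c.qP ≫ pullback.fst c.p c.p = G
    rw [← Category.assoc, sq.fac_right, pullback.lift_fst]
  · show sq.lift ≫ c.qP ≫ pullback.snd c.p c.p = G'
    rw [← Category.assoc, sq.fac_right, pullback.lift_snd]

/-- Every left homotopy from `x` to `x` has a corresponding endpoint `K`. -/
lemma exists_match (h : LeftHtpy c.ms c.x c.x) : ∃ K, c.MatchH h K := by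
  haveI := c.ms.lift_tcof_fib _ c.p (c.i1_cof h.cyl) (c.i1_w h.cyl) c.hpFib
  have sq : CommSq (c.x ≫ c.r) (coprod.inl ≫ h.cyl.ii) c.p
      (prod.lift (h.cyl.s ≫ c.x) h.h) := by
    constructor
    apply Limits.prod.hom_ext
    · simp only [Category.assoc, prod.lift_fst, c.r_p_fst, Category.comp_id]
      rw [← Category.assoc, ← Category.assoc, cyl_i1_s, Category.id_comp]
    · simp only [Category.assoc, prod.lift_snd, c.r_p_snd, Category.comp_id]
      rw [← Category.assoc, lh_i1]
  exact ⟨(coprod.inr ≫ h.cyl.ii) ≫ sq.lift, sq.lift, sq.fac_right, sq.fac_left, rfl⟩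

/-- Every fibrewise endpoint `K` arises from a left homotopy (through the chosen
cylinder). -/
lemma match_of_k {K : c.D0 ⟶ c.P} (hK : K ≫ c.p = c.xx) :
    ∃ h : LeftHtpy c.ms c.x c.x, c.MatchH h K := by
  haveI := c.tf_pfst c.cy0.ii c.cy0.cof
  have sq : CommSq (coprod.desc (c.x ≫ c.r) K) c.cy0.ii (c.p ≫ prod.fst)
      (c.cy0.s ≫ c.x) := by
    constructor
    apply Limits.coprod.hom_ext
    · simp only [coprod.inl_desc_assoc, Category.assoc, c.r_p_fst, Category.comp_id]
      rw [← Category.assoc, ← Category.assoc, cyl_i1_s, Category.id_comp]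
    · simp only [coprod.inr_desc_assoc]
      rw [reassoc_of% hK, prod.lift_fst, ← Category.assoc, ← Category.assoc,
        cyl_i0_s, Category.id_comp]
  have hends : c.cy0.ii ≫ sq.lift ≫ c.p ≫ prod.snd = coprod.desc c.x c.x := by
    rw [← Category.assoc, sq.fac_left]
    apply Limits.coprod.hom_ext
    · simp only [coprod.inl_desc_assoc, coprod.inl_desc, Category.assoc, c.r_p_snd,
        Category.comp_id]
    · simp only [coprod.inr_desc_assoc, coprod.inr_desc]
      rw [reassoc_of% hK, prod.lift_snd]
  refine ⟨⟨c.cy0, sq.lift ≫ c.p ≫ prod.snd, hends⟩, sq.lift, ?_, ?_, ?_⟩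
  · apply Limits.prod.hom_ext
    · rw [prod.lift_fst, Category.assoc, sq.fac_right]
    · rw [prod.lift_snd, Category.assoc]
  · rw [Category.assoc, sq.fac_left, coprod.inl_desc]
  · rw [Category.assoc, sq.fac_left, coprod.inr_desc]

/-- Two matches of the same left homotopy give fibrewise homotopic endpoints. -/
lemma m0 {h : LeftHtpy c.ms c.x c.x} {K K' : c.D0 ⟶ c.P}
    (m : c.MatchH h K) (m' : c.MatchH h K') : c.RH K K' := by
  obtain ⟨G, hGp, hG1, hG0⟩ := m
  obtain ⟨G', hG'p, hG'1, hG'0⟩ := m'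
  obtain ⟨Mh, hM1, hM2⟩ := c.lift_unique_rh (c.i1_cof h.cyl) (c.i1_w h.cyl)
    (G := G) (G' := G') (by rw [hG1, hG'1]) (by rw [hGp, hG'p])
  exact ⟨(coprod.inr ≫ h.cyl.ii) ≫ Mh,
    by rw [Category.assoc _ Mh, hM1, hG0], by rw [Category.assoc _ Mh, hM2, hG'0]⟩

/-- 2-homotopic left homotopies have fibrewise homotopic endpoints. -/
lemma m1 {h₁ h₂ : LeftHtpy c.ms c.x c.x} {K₁ K₂ : c.D0 ⟶ c.P}
    (m₁ : c.MatchH h₁ K₁) (m₂ : c.MatchH h₂ K₂) (T : TwoHtp c.ms h₁ h₂) :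
    c.RH K₁ K₂ := by
  obtain ⟨G₁, hG₁p, hG₁1, hG₁0⟩ := m₁
  obtain ⟨G₂, hG₂p, hG₂1, hG₂0⟩ := m₂
  obtain ⟨Dd, kk, t, hkkc, htw, hft, H, hH1, hH2⟩ := T
  have hl1c : c.ms.Cof (pushout.inl h₁.cyl.ii h₂.cyl.ii ≫ kk) :=
    cof_of_coflike _ (coflike_comp (c.coflike_po_inl _ _ h₂.cyl.cof) (coflike_of_cof hkkc))
  have hl1t : (pushout.inl h₁.cyl.ii h₂.cyl.ii ≫ kk) ≫ t = h₁.cyl.s := by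
    rw [Category.assoc, hft, pushout.inl_desc]
  have hl1w : c.ms.W (pushout.inl h₁.cyl.ii h₂.cyl.ii ≫ kk) :=
    c.ms.w_cancel_left _ t (by rw [hl1t]; exact h₁.cyl.weq) htw
  haveI := c.ms.lift_tcof_fib _ c.p hl1c hl1w c.hpFib
  have sq : CommSq G₁ (pushout.inl h₁.cyl.ii h₂.cyl.ii ≫ kk) c.p
      (prod.lift (t ≫ c.x) H) := by
    constructor
    rw [hG₁p]
    apply Limits.prod.hom_ext
    · simp only [Category.assoc, prod.lift_fst]
      rw [reassoc_of% hft, pushout.inl_desc_assoc]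
    · simp only [Category.assoc, prod.lift_snd]
      rw [hH1]
  have fl : pushout.inl h₁.cyl.ii h₂.cyl.ii ≫ kk ≫ sq.lift = G₁ := by
    rw [← Category.assoc]; exact sq.fac_left
  have hcond : h₂.cyl.ii ≫ (pushout.inr h₁.cyl.ii h₂.cyl.ii ≫ kk) ≫ sq.lift
      = h₁.cyl.ii ≫ G₁ := by
    rw [← Category.assoc, ← Category.assoc, ← pushout.condition, Category.assoc,
      Category.assoc, fl]
  have hG₂'p : ((pushout.inr h₁.cyl.ii h₂.cyl.ii ≫ kk) ≫ sq.lift) ≫ c.p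
      = prod.lift (h₂.cyl.s ≫ c.x) h₂.h := by
    rw [Category.assoc, sq.fac_right]
    apply Limits.prod.hom_ext
    · simp only [Category.assoc, prod.lift_fst]
      rw [reassoc_of% hft, pushout.inr_desc_assoc]
    · simp only [Category.assoc, prod.lift_snd]
      rw [hH2]
  obtain ⟨Mh, hM1, hM2⟩ := c.lift_unique_rh (c.i1_cof h₂.cyl) (c.i1_w h₂.cyl)
    (G := (pushout.inr h₁.cyl.ii h₂.cyl.ii ≫ kk) ≫ sq.lift) (G' := G₂)
    (by rw [Category.assoc, hcond, ← Category.assoc, hG₁1, hG₂1])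
    (by rw [hG₂'p, hG₂p])
  refine ⟨(coprod.inr ≫ h₂.cyl.ii) ≫ Mh, ?_, ?_⟩
  · rw [Category.assoc _ Mh, hM1, Category.assoc, hcond, ← Category.assoc, hG₁0]
  · rw [Category.assoc _ Mh, hM2, hG₂0]

/-- Endpoints can be moved along fibrewise homotopies. -/
lemma m2a {h : LeftHtpy c.ms c.x c.x} {K₁ K₂ : c.D0 ⟶ c.P}
    (m : c.MatchH h K₂) (rh : c.RH K₁ K₂) : c.MatchH h K₁ := by
  obtain ⟨G₂, hGp, hG1, hG0⟩ := m
  obtain ⟨N, hN1, hN2⟩ := rh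
  haveI := c.tf_e₂ h.cyl.ii h.cyl.cof
  have sq : CommSq (coprod.desc (c.x ≫ c.r ≫ c.jP) N) h.cyl.ii c.e₂ G₂ := by
    constructor
    apply Limits.coprod.hom_ext
    · simp only [coprod.inl_desc_assoc, Category.assoc]
      rw [c.jP_e₂, Category.comp_id, ← Category.assoc, hG1]
    · simp only [coprod.inr_desc_assoc]
      rw [hN2, ← Category.assoc, hG0]
  refine ⟨sq.lift ≫ c.e₁, ?_, ?_, ?_⟩
  · rw [Category.assoc, c.e₁_p, ← Category.assoc, sq.fac_right, hGp]
  · have h2 : (coprod.inl ≫ h.cyl.ii) ≫ sq.lift = c.x ≫ c.r ≫ c.jP := by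
      rw [Category.assoc, sq.fac_left, coprod.inl_desc]
    rw [← Category.assoc, h2, Category.assoc, Category.assoc, c.jP_e₁, Category.comp_id]
  · have h3 : (coprod.inr ≫ h.cyl.ii) ≫ sq.lift = N := by
      rw [Category.assoc, sq.fac_left, coprod.inr_desc]
    rw [← Category.assoc, h3, hN1]

/-- Left homotopies matched to a common endpoint are 2-homotopic. -/
lemma m2b {h₁ h₂ : LeftHtpy c.ms c.x c.x} {K : c.D0 ⟶ c.P}
    (m₁ : c.MatchH h₁ K) (m₂ : c.MatchH h₂ K) : TwoHtp c.ms h₁ h₂ := by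
  obtain ⟨G₁, hG₁p, hG₁1, hG₁0⟩ := m₁
  obtain ⟨G₂, hG₂p, hG₂1, hG₂0⟩ := m₂
  have hglue : h₁.cyl.ii ≫ G₁ = h₂.cyl.ii ≫ G₂ := by
    apply Limits.coprod.hom_ext
    · rw [← Category.assoc, ← Category.assoc, hG₁1, hG₂1]
    · rw [← Category.assoc, ← Category.assoc, hG₁0, hG₂0]
  obtain ⟨Dd, kk, t, hkc, htf, htw, hfacd⟩ :=
    c.ms.fact_cof_tfib (pushout.desc h₁.cyl.s h₂.cyl.s
      (by rw [h₁.cyl.fact, h₂.cyl.fact]))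
  haveI := c.tf_pfst kk hkc
  have sq : CommSq (pushout.desc G₁ G₂ hglue) kk (c.p ≫ prod.fst) (t ≫ c.x) := by
    constructor
    apply pushout.hom_ext
    · rw [pushout.inl_desc_assoc, reassoc_of% hfacd, pushout.inl_desc_assoc,
        reassoc_of% hG₁p, prod.lift_fst]
    · rw [pushout.inr_desc_assoc, reassoc_of% hfacd, pushout.inr_desc_assoc,
        reassoc_of% hG₂p, prod.lift_fst]
  refine ⟨Dd, kk, t, hkc, htw, hfacd, sq.lift ≫ c.p ≫ prod.snd, ?_, ?_⟩
  · rw [← Category.assoc kk, sq.fac_left, pushout.inl_desc_assoc,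
      reassoc_of% hG₁p, prod.lift_snd]
  · rw [← Category.assoc kk, sq.fac_left, pushout.inr_desc_assoc,
      reassoc_of% hG₂p, prod.lift_snd]

lemma fiblike_prodsnd (Z Z' : M) : FibLike c.ms (prod.snd : Z ⨯ Z' ⟶ Z') :=
  fiblike_pullback (IsPullback.of_hasBinaryProduct' (C := M) (X := Z) (Y := Z')).flip
    (fun _ _ i hic hiw => c.ms.lift_tcof_fib _ _ hic hiw (c.hfib Z))

/-- The chosen path object of the loop object, as a path-like object. -/
noncomputable def plO : PL c.ms c.Om where
  E := c.OJ
  d₁ := c.pO ≫ prod.fst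
  d₂ := c.pO ≫ prod.snd
  j := c.jO
  hj₁ := by rw [← Category.assoc, c.hjpO, prod.lift_fst]
  hj₂ := by rw [← Category.assoc, c.hjpO, prod.lift_snd]
  l₁ := tfiblike_of_tfib
    (fib_of_fiblike _ (fiblike_comp (fiblike_of_fib c.hpOf) (c.fiblike_prodfst _ _)))
    (w_sect (s := c.jO) (by rw [← Category.assoc, c.hjpO, prod.lift_fst]) c.hjOw)
  l₂ := tfiblike_of_tfib
    (fib_of_fiblike _ (fiblike_comp (fiblike_of_fib c.hpOf) (c.fiblike_prodsnd _ _)))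
    (w_sect (s := c.jO) (by rw [← Category.assoc, c.hjpO, prod.lift_snd]) c.hjOw)

/-- Left homotopies in the loop object convert to right homotopies through `plO`. -/
lemma l2r {cy : Cyl c.ms c.D0} {L : cy.C ⟶ c.Om} {a b : c.D0 ⟶ c.Om}
    (hL : cy.ii ≫ L = coprod.desc b a) : c.plO.R a b := by
  haveI := c.ms.lift_tcof_fib _ c.pO (c.i0_cof cy) (c.i0_w cy) c.hpOf
  have sq : CommSq (a ≫ c.jO) (coprod.inr ≫ cy.ii) c.pO (prod.lift (cy.s ≫ a) L) := by
    constructor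
    rw [Category.assoc, c.hjpO]
    apply Limits.prod.hom_ext
    · simp only [Category.assoc, prod.lift_fst, Category.comp_id]
      rw [← Category.assoc, ← Category.assoc, cyl_i0_s, Category.id_comp]
    · simp only [Category.assoc, prod.lift_snd, Category.comp_id]
      rw [hL, coprod.inr_desc]
  refine ⟨(coprod.inl ≫ cy.ii) ≫ sq.lift, ?_, ?_⟩
  · show ((coprod.inl ≫ cy.ii) ≫ sq.lift) ≫ c.pO ≫ prod.fst = a
    rw [Category.assoc, reassoc_of% sq.fac_right, prod.lift_fst, ← Category.assoc,
      cyl_i1_s, Category.id_comp]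
  · show ((coprod.inl ≫ cy.ii) ≫ sq.lift) ≫ c.pO ≫ prod.snd = b
    rw [Category.assoc, reassoc_of% sq.fac_right, prod.lift_snd, Category.assoc,
      hL, coprod.inl_desc]

/-- Right homotopies through any path-like object convert to left homotopies. -/
lemma r2l {pl : PL c.ms c.Om} {a b : c.D0 ⟶ c.Om} (h : pl.R a b) :
    MapHtpRel c.ms a b := by
  obtain ⟨N, hN1, hN2⟩ := h
  haveI := pl.l₂ c.cy0.ii c.cy0.cof
  have sq : CommSq (coprod.desc (b ≫ pl.j) N) c.cy0.ii pl.d₂ (c.cy0.s ≫ b) := by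
    constructor
    apply Limits.coprod.hom_ext
    · rw [coprod.inl_desc_assoc, Category.assoc, pl.hj₂, Category.comp_id,
        ← Category.assoc, ← Category.assoc, cyl_i1_s, Category.id_comp]
    · rw [coprod.inr_desc_assoc, hN2, ← Category.assoc, ← Category.assoc, cyl_i0_s,
        Category.id_comp]
  refine ⟨c.cy0, sq.lift ≫ pl.d₁, ?_⟩
  apply Limits.coprod.hom_ext
  · rw [coprod.inl_desc, reassoc_of% sq.fac_left,
      coprod.inl_desc_assoc, Category.assoc, pl.hj₁, Category.comp_id]
  · rw [coprod.inr_desc, reassoc_of% sq.fac_left,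
      coprod.inr_desc_assoc, hN1]

/-- the fibrewise path object restricted to the loop object -/
noncomputable abbrev OI : M := pullback (c.e₁ ≫ c.p) c.xx

noncomputable def dOI₁ : c.OI ⟶ c.Om :=
  pullback.lift (pullback.fst _ _ ≫ c.e₁) (pullback.snd _ _)
    (by rw [Category.assoc]; exact pullback.condition)

noncomputable def dOI₂ : c.OI ⟶ c.Om :=
  pullback.lift (pullback.fst _ _ ≫ c.e₂) (pullback.snd _ _)
    (by rw [Category.assoc, ← c.e₁_p]; exact pullback.condition)

noncomputable def jOI : c.Om ⟶ c.OI :=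
  pullback.lift (c.fstO ≫ c.jP) c.sndO
    (by rw [Category.assoc, ← Category.assoc c.jP, c.jP_e₁, Category.id_comp,
      pullback.condition])

lemma isPB_dOI₁ : IsPullback (pullback.fst (c.e₁ ≫ c.p) c.xx) c.dOI₁ c.e₁ c.fstO := by
  have hb : c.dOI₁ ≫ c.sndO = pullback.snd (c.e₁ ≫ c.p) c.xx := pullback.lift_snd _ _ _
  have big : IsPullback (pullback.fst (c.e₁ ≫ c.p) c.xx) (c.dOI₁ ≫ c.sndO)
      (c.e₁ ≫ c.p) c.xx := by
    rw [hb]; exact IsPullback.of_hasPullback _ _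
  exact big.of_bot (pullback.lift_fst _ _ _).symm (IsPullback.of_hasPullback c.p c.xx)

lemma isPB_dOI₂ : IsPullback (pullback.fst (c.e₁ ≫ c.p) c.xx) c.dOI₂ c.e₂ c.fstO := by
  have hb : c.dOI₂ ≫ c.sndO = pullback.snd (c.e₁ ≫ c.p) c.xx := pullback.lift_snd _ _ _
  have big : IsPullback (pullback.fst (c.e₁ ≫ c.p) c.xx) (c.dOI₂ ≫ c.sndO)
      (c.e₂ ≫ c.p) c.xx := by
    rw [hb, ← c.e₁_p]; exact IsPullback.of_hasPullback _ _
  exact big.of_bot (pullback.lift_fst _ _ _).symm (IsPullback.of_hasPullback c.p c.xx)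

/-- the restricted fibrewise path object as a path-like object for `Ω` -/
noncomputable def plOI : PL c.ms c.Om where
  E := c.OI
  d₁ := c.dOI₁
  d₂ := c.dOI₂
  j := c.jOI
  hj₁ := by
    apply pullback.hom_ext
    · rw [Category.assoc, Category.id_comp]
      rw [show c.dOI₁ ≫ c.fstO = pullback.fst _ _ ≫ c.e₁ from pullback.lift_fst _ _ _]
      rw [← Category.assoc, show c.jOI ≫ pullback.fst _ _ = c.fstO ≫ c.jP from
        pullback.lift_fst _ _ _, Category.assoc, c.jP_e₁, Category.comp_id]
    · rw [Category.assoc, Category.id_comp]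
      rw [show c.dOI₁ ≫ c.sndO = pullback.snd _ _ from pullback.lift_snd _ _ _]
      exact pullback.lift_snd _ _ _
  hj₂ := by
    apply pullback.hom_ext
    · rw [Category.assoc, Category.id_comp]
      rw [show c.dOI₂ ≫ c.fstO = pullback.fst _ _ ≫ c.e₂ from pullback.lift_fst _ _ _]
      rw [← Category.assoc, show c.jOI ≫ pullback.fst _ _ = c.fstO ≫ c.jP from
        pullback.lift_fst _ _ _, Category.assoc, c.jP_e₂, Category.comp_id]
    · rw [Category.assoc, Category.id_comp]
      rw [show c.dOI₂ ≫ c.sndO = pullback.snd _ _ from pullback.lift_snd _ _ _]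
      exact pullback.lift_snd _ _ _
  l₁ := fun _ _ i hic => hlp_pullback c.isPB_dOI₁.flip (c.tf_e₁ i hic)
  l₂ := fun _ _ i hic => hlp_pullback c.isPB_dOI₂.flip (c.tf_e₂ i hic)

/-- A fibrewise right homotopy induces a right homotopy in the loop object. -/
lemma rh_plOI {K K' : c.D0 ⟶ c.P} (hK : K ≫ c.p = c.xx) (hK' : K' ≫ c.p = c.xx)
    (rh : c.RH K K') :
    c.plOI.R (pullback.lift K (𝟙 c.D0) (by rw [hK, Category.id_comp]))
      (pullback.lift K' (𝟙 c.D0) (by rw [hK', Category.id_comp])) := by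
  obtain ⟨N, hN1, hN2⟩ := rh
  refine ⟨pullback.lift N (𝟙 c.D0)
    (by rw [← Category.assoc, hN1, hK, Category.id_comp]), ?_, ?_⟩
  · show pullback.lift N (𝟙 c.D0) _ ≫ c.dOI₁ = _
    apply pullback.hom_ext
    · rw [Category.assoc, show c.dOI₁ ≫ c.fstO = pullback.fst _ _ ≫ c.e₁ from
        pullback.lift_fst _ _ _, ← Category.assoc, pullback.lift_fst, hN1,
        pullback.lift_fst]
    · rw [Category.assoc, show c.dOI₁ ≫ c.sndO = pullback.snd _ _ from
        pullback.lift_snd _ _ _, pullback.lift_snd, pullback.lift_snd]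
  · show pullback.lift N (𝟙 c.D0) _ ≫ c.dOI₂ = _
    apply pullback.hom_ext
    · rw [Category.assoc, show c.dOI₂ ≫ c.fstO = pullback.fst _ _ ≫ c.e₂ from
        pullback.lift_fst _ _ _, ← Category.assoc, pullback.lift_fst, hN2,
        pullback.lift_fst]
    · rw [Category.assoc, show c.dOI₂ ≫ c.sndO = pullback.snd _ _ from
        pullback.lift_snd _ _ _, pullback.lift_snd, pullback.lift_snd]

/-- Every map to the loop object is homotopic to a strictly based one. -/
lemma straighten (u : c.D0 ⟶ c.Om) :
    ∃ u₁ : c.D0 ⟶ c.Om, u₁ ≫ c.sndO = 𝟙 c.D0 ∧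
      ∃ L : c.cy0.C ⟶ c.Om, c.cy0.ii ≫ L = coprod.desc u₁ u := by
  haveI := c.tf_term c.cy0.ii c.cy0.cof
  have sq : CommSq (coprod.desc (𝟙 c.D0) (u ≫ c.sndO)) c.cy0.ii (terminal.from c.D0)
      (terminal.from c.cy0.C) := ⟨terminal.hom_ext _ _⟩
  haveI := c.fiblike_sndO (coprod.inr ≫ c.cy0.ii) (c.i0_cof c.cy0) (c.i0_w c.cy0)
  have sq2 : CommSq u (coprod.inr ≫ c.cy0.ii) c.sndO sq.lift := by
    constructor
    rw [Category.assoc, sq.fac_left, coprod.inr_desc]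
  refine ⟨(coprod.inl ≫ c.cy0.ii) ≫ sq2.lift, ?_, sq2.lift, ?_⟩
  · rw [Category.assoc, sq2.fac_right, Category.assoc, sq.fac_left, coprod.inl_desc]
  · apply Limits.coprod.hom_ext
    · rw [coprod.inl_desc, ← Category.assoc]
    · rw [coprod.inr_desc, ← Category.assoc, sq2.fac_left]

/-- A left homotopy between strictly based maps of the loop object compresses to
a fibrewise right homotopy of the underlying maps to `P`. -/
lemma vert_rh {cy : Cyl c.ms c.D0} {L : cy.C ⟶ c.Om} {u₁ u₁' : c.D0 ⟶ c.Om}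
    (h1 : u₁ ≫ c.sndO = 𝟙 c.D0) (h1' : u₁' ≫ c.sndO = 𝟙 c.D0)
    (hL : cy.ii ≫ L = coprod.desc u₁' u₁) :
    c.RH (u₁' ≫ c.fstO) (u₁ ≫ c.fstO) := by
  -- Step A: compress the track of the homotopy in the base
  obtain ⟨E', kkC, tC, hkc, htf, htw, hfacC⟩ :=
    c.ms.fact_cof_tfib (pushout.desc (𝟙 cy.C) (𝟙 cy.C) rfl : pushout cy.ii cy.ii ⟶ cy.C)
  have hxis : cy.ii ≫ L ≫ c.sndO = cy.ii ≫ cy.s := by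
    rw [← Category.assoc, hL, cy.fact]
    apply Limits.coprod.hom_ext
    · rw [coprod.inl_desc_assoc, h1', coprod.inl_desc]
    · rw [coprod.inr_desc_assoc, h1, coprod.inr_desc]
  haveI := c.tf_term kkC hkc
  have sqA : CommSq (pushout.desc (L ≫ c.sndO) cy.s hxis) kkC (terminal.from c.D0)
      (terminal.from E') := ⟨terminal.hom_ext _ _⟩
  -- Step B: lift along the fibration sndO
  have hl1c : c.ms.Cof (pushout.inl cy.ii cy.ii ≫ kkC) :=
    cof_of_coflike _ (coflike_comp (c.coflike_po_inl _ _ cy.cof) (coflike_of_cof hkc))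
  have hl1w : c.ms.W (pushout.inl cy.ii cy.ii ≫ kkC) :=
    w_retr (by rw [Category.assoc, hfacC, pushout.inl_desc]) htw
  haveI := c.fiblike_sndO _ hl1c hl1w
  have sqB : CommSq L (pushout.inl cy.ii cy.ii ≫ kkC) c.sndO sqA.lift := by
    constructor
    rw [Category.assoc, sqA.fac_left, pushout.inl_desc]
  have hL's : pushout.inr cy.ii cy.ii ≫ kkC ≫ sqB.lift ≫ c.sndO = cy.s := by
    rw [sqB.fac_right, sqA.fac_left, pushout.inr_desc]
  have flB : pushout.inl cy.ii cy.ii ≫ kkC ≫ sqB.lift = L := by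
    rw [← Category.assoc]; exact sqB.fac_left
  have hL'ii : cy.ii ≫ pushout.inr cy.ii cy.ii ≫ kkC ≫ sqB.lift
      = coprod.desc u₁' u₁ := by
    rw [← hL, ← Category.assoc, ← pushout.condition, Category.assoc, flB]
  -- Step C: produce the fibrewise homotopy
  haveI := c.ms.lift_tcof_fib _ c.qP (c.i1_cof cy) (c.i1_w cy) c.hqPf
  have hw : (cy.s ≫ u₁' ≫ c.fstO) ≫ c.p
      = (pushout.inr cy.ii cy.ii ≫ kkC ≫ sqB.lift ≫ c.fstO) ≫ c.p := by
    simp only [Category.assoc, pullback.condition]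
    rw [← Category.assoc u₁', h1', Category.id_comp, reassoc_of% hL's]
  have sqC : CommSq ((u₁' ≫ c.fstO) ≫ c.jP) (coprod.inl ≫ cy.ii) c.qP
      (pullback.lift (cy.s ≫ u₁' ≫ c.fstO)
        (pushout.inr cy.ii cy.ii ≫ kkC ≫ sqB.lift ≫ c.fstO) hw) := by
    constructor
    apply pullback.hom_ext
    · simp only [Category.assoc, pullback.lift_fst]
      rw [c.jP_e₁, Category.comp_id, ← Category.assoc, ← Category.assoc, cyl_i1_s,
        Category.id_comp]
    · simp only [Category.assoc, pullback.lift_snd]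
      rw [c.jP_e₂, Category.comp_id, reassoc_of% hL'ii, coprod.inl_desc_assoc]
  refine ⟨(coprod.inr ≫ cy.ii) ≫ sqC.lift, ?_, ?_⟩
  · show ((coprod.inr ≫ cy.ii) ≫ sqC.lift) ≫ c.qP ≫ pullback.fst c.p c.p
      = u₁' ≫ c.fstO
    have fr : sqC.lift ≫ c.qP ≫ pullback.fst c.p c.p = cy.s ≫ u₁' ≫ c.fstO := by
      rw [← Category.assoc, sqC.fac_right, pullback.lift_fst]
    rw [Category.assoc, fr, ← Category.assoc, cyl_i0_s, Category.id_comp]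
  · show ((coprod.inr ≫ cy.ii) ≫ sqC.lift) ≫ c.qP ≫ pullback.snd c.p c.p
      = u₁ ≫ c.fstO
    have fr : sqC.lift ≫ c.qP ≫ pullback.snd c.p c.p
        = pushout.inr cy.ii cy.ii ≫ kkC ≫ sqB.lift ≫ c.fstO := by
      rw [← Category.assoc, sqC.fac_right, pullback.lift_snd]
    rw [Category.assoc, fr, Category.assoc, reassoc_of% hL'ii, coprod.inr_desc_assoc]

end Ctx


end St16

theorem pi1_iso_pi0_loop {M : Type u} [Category.{v} M]
    [HasFiniteLimits M] [HasFiniteColimits M] [HasBinaryCoproducts M]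
    [HasPushouts M] [HasBinaryProducts M] [HasPullbacks M]
    (ms : ModelStr M) (hfib : ∀ Z : M, ms.Fibrant Z)
    -- the based object `(X, x : D₀ → X)`
    (D0 : M) (hD0cof : ms.Cofibrant D0) (hD0wc : ms.WeaklyContractible D0)
    (X : M) (x : D0 ⟶ X)
    -- a path object `P` of `X` with `r` a cofibration
    (P : M) (r : X ⟶ P) (p : P ⟶ X ⨯ X)
    (hrW : ms.W r) (hrCof : ms.Cof r) (hpFib : ms.Fib p)
    (hfact : r ≫ p = prod.lift (𝟙 X) (𝟙 X)) :
    -- `π₁(X, x) ≅ π₀(Ω_x X) = [D₀, Ω_x X]`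
    Nonempty (Pi1Set ms x x ≃
      Quot (MapHtpRel ms (A := D0) (B := pullback p (prod.lift x x)))) := by
  classical
  obtain ⟨C0, ii0, s0, hii0c, hs0f, hs0w, hfac0⟩ :=
    ms.fact_cof_tfib (coprod.desc (𝟙 D0) (𝟙 D0))
  obtain ⟨PI, jP, qP, hjPc, hjPw, hqPf, hjq⟩ :=
    ms.fact_tcof_fib (pullback.lift (𝟙 P) (𝟙 P) rfl : P ⟶ pullback p p)
  obtain ⟨OJ, jO, pO, hjOc, hjOw, hpOf, hjpO⟩ :=
    ms.fact_tcof_fib (prod.lift (𝟙 _) (𝟙 _) :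
      pullback p (prod.lift x x) ⟶ pullback p (prod.lift x x) ⨯ pullback p (prod.lift x x))
  let c : St16.Ctx M := ⟨ms, hfib, D0, hD0cof, hD0wc, X, x, P, r, p, hrW, hpFib, hfact,
    ⟨C0, ii0, s0, hii0c, hs0w, hfac0⟩, PI, jP, qP, hjPc, hjPw, hqPf, hjq,
    OJ, jO, pO, hjOc, hjOw, hpOf, hjpO⟩
  -- the forward map
  have hKOf : ∀ h : LeftHtpy ms x x, c.MatchH h (c.exists_match h).choose :=
    fun h => (c.exists_match h).choose_spec
  let KOf : LeftHtpy ms x x → (D0 ⟶ P) := fun h => (c.exists_match h).choose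
  have hKp : ∀ h : LeftHtpy ms x x, KOf h ≫ p = prod.lift x x := fun h => (hKOf h).k_p
  let uOf : LeftHtpy ms x x → (D0 ⟶ pullback p (prod.lift x x)) := fun h =>
    pullback.lift (KOf h) (𝟙 D0) (by rw [hKp h, Category.id_comp])
  have rh2m : ∀ {K K' : D0 ⟶ P} (hK : K ≫ p = prod.lift x x)
      (hK' : K' ≫ p = prod.lift x x), c.RH K K' →
      MapHtpRel ms (pullback.lift K (𝟙 D0) (by rw [hK, Category.id_comp]))
        (pullback.lift K' (𝟙 D0) (by rw [hK', Category.id_comp])) :=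
    fun hK hK' hr => c.r2l (c.rh_plOI hK hK' hr)
  let Φ : Pi1Set ms x x →
      Quot (MapHtpRel ms (A := D0) (B := pullback p (prod.lift x x))) :=
    Quot.lift (fun h => Quot.mk _ (uOf h)) (fun h₁ h₂ T =>
      Quot.sound (rh2m (hKp h₁) (hKp h₂) (c.m1 (hKOf h₁) (hKOf h₂) T)))
  have Φmk : ∀ h : LeftHtpy ms x x, Φ (Quot.mk _ h) = Quot.mk _ (uOf h) := fun _ => rfl
  -- straightening data
  have hstp : ∀ u : D0 ⟶ pullback p (prod.lift x x),
      ((c.straighten u).choose ≫ c.fstO) ≫ p = prod.lift x x := fun u => by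
    rw [Category.assoc, pullback.condition, ← Category.assoc,
      (c.straighten u).choose_spec.1, Category.id_comp]
  let SK := {K : D0 ⟶ P // K ≫ p = prod.lift x x}
  let RH' : SK → SK → Prop := fun K K' => c.RH K.1 K'.1
  let ΞK : (D0 ⟶ pullback p (prod.lift x x)) → SK := fun u =>
    ⟨(c.straighten u).choose ≫ c.fstO, hstp u⟩
  have xi_sound : ∀ (v v' : D0 ⟶ pullback p (prod.lift x x)), MapHtpRel ms v v' →
      Quot.mk RH' (ΞK v) = Quot.mk RH' (ΞK v') := by
    intro v v' hM
    obtain ⟨cy, L, hL⟩ := hM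
    obtain ⟨Lv, hLv⟩ := (c.straighten v).choose_spec.2
    obtain ⟨Lv', hLv'⟩ := (c.straighten v').choose_spec.2
    have Rchain : ((c.plO.rev.comp c.plO).comp c.plO).R
        ((c.straighten v).choose) ((c.straighten v').choose) :=
      (c.plO.rev.comp c.plO).comp_r c.plO
        (c.plO.rev.comp_r c.plO (c.plO.rev_r (c.l2r hLv)) (c.l2r hL)) (c.l2r hLv')
    obtain ⟨cy2, L2, hL2⟩ := c.r2l Rchain
    exact (@Quot.sound SK RH' (ΞK v') (ΞK v) (c.vert_rh (c.straighten v).choose_spec.1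
      (c.straighten v').choose_spec.1 hL2)).symm
  let Ξ : Quot (MapHtpRel ms (A := D0) (B := pullback p (prod.lift x x))) → Quot RH' :=
    Quot.lift (fun v => Quot.mk RH' (ΞK v)) xi_sound
  have Ξmk : ∀ v, Ξ (Quot.mk _ v) = Quot.mk RH' (ΞK v) := fun _ => rfl
  have xi_b : ∀ (u : D0 ⟶ pullback p (prod.lift x x)) (hu : u ≫ c.sndO = 𝟙 D0)
      (hup : (u ≫ c.fstO) ≫ p = prod.lift x x),
      Quot.mk RH' (ΞK u) = Quot.mk RH' ⟨u ≫ c.fstO, hup⟩ := by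
    intro u hu hup
    obtain ⟨L, hL⟩ := (c.straighten u).choose_spec.2
    exact @Quot.sound SK RH' (ΞK u) ⟨u ≫ c.fstO, hup⟩
      (c.vert_rh hu (c.straighten u).choose_spec.1 hL)
  -- the map back from endpoints to left homotopies
  have hhOf : ∀ K : SK, c.MatchH (c.match_of_k K.2).choose K.1 :=
    fun K => (c.match_of_k K.2).choose_spec
  let g : Quot RH' → Pi1Set ms x x :=
    Quot.lift (fun K => Quot.mk _ (c.match_of_k K.2).choose) (fun K K' hr =>
      Quot.sound (c.m2b (hhOf K) (c.m2a (hhOf K') hr)))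
  have gmk : ∀ K : SK, g (Quot.mk RH' K) = Quot.mk _ (c.match_of_k K.2).choose :=
    fun _ => rfl
  -- injectivity
  have hinj : Function.Injective Φ := by
    intro a b
    induction a using Quot.ind with | _ h₁ => ?_
    induction b using Quot.ind with | _ h₂ => ?_
    intro hab
    rw [Φmk h₁, Φmk h₂] at hab
    have hXi := congrArg Ξ hab
    rw [Ξmk, Ξmk] at hXi
    have hfst : ∀ h, uOf h ≫ c.fstO = KOf h := fun h => pullback.lift_fst _ _ _
    have hb : ∀ h : LeftHtpy ms x x, Quot.mk RH' (ΞK (uOf h))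
        = Quot.mk RH' ⟨KOf h, hKp h⟩ := by
      intro h
      rw [xi_b (uOf h) (pullback.lift_snd _ _ _)
        (by rw [hfst h]; exact hKp h)]
      exact congrArg _ (Subtype.ext (hfst h))
    have hXi' : Quot.mk RH' (⟨KOf h₁, hKp h₁⟩ : SK) = Quot.mk RH' ⟨KOf h₂, hKp h₂⟩ := by
      rw [← hb h₁, ← hb h₂]; exact hXi
    have hg := congrArg g hXi'
    rw [gmk, gmk] at hg
    have lastl : ∀ h : LeftHtpy ms x x,
        (Quot.mk (TwoHtp ms) h : Pi1Set ms x x)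
          = Quot.mk _ (c.match_of_k (⟨KOf h, hKp h⟩ : SK).2).choose := fun h =>
      Quot.sound (c.m2b (hKOf h) (hhOf ⟨KOf h, hKp h⟩))
    rw [lastl h₁, lastl h₂]
    exact hg
  -- surjectivity
  have hsurj : Function.Surjective Φ := by
    intro qu
    induction qu using Quot.ind with | _ u => ?_
    obtain ⟨u₁, hu₁, L, hLw⟩ := c.straighten u
    have hK₁ : (u₁ ≫ c.fstO) ≫ p = prod.lift x x := by
      rw [Category.assoc, pullback.condition, ← Category.assoc, hu₁, Category.id_comp]
    obtain ⟨hstar, hmstar⟩ := c.match_of_k hK₁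
    refine ⟨Quot.mk _ hstar, ?_⟩
    have e1 : Quot.mk (MapHtpRel ms) (uOf hstar)
        = Quot.mk _ (pullback.lift (u₁ ≫ c.fstO) (𝟙 D0)
            (by rw [hK₁, Category.id_comp])) :=
      Quot.sound (rh2m (hKp hstar) hK₁ (c.m0 (hKOf hstar) hmstar))
    have e2 : pullback.lift (u₁ ≫ c.fstO) (𝟙 D0)
        (by rw [hK₁, Category.id_comp] :
          (u₁ ≫ c.fstO) ≫ p = 𝟙 D0 ≫ prod.lift x x) = u₁ := by
      apply pullback.hom_ext
      · rw [pullback.lift_fst]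
      · rw [pullback.lift_snd, hu₁]
    have e3 : Quot.mk (MapHtpRel ms) u = Quot.mk _ u₁ :=
      Quot.sound ⟨c.cy0, L, hLw⟩
    show Φ (Quot.mk (TwoHtp ms) hstar) = Quot.mk _ u
    rw [Φmk hstar, e1, e2, e3]
  exact ⟨Equiv.ofBijective Φ ⟨hinj, hsurj⟩⟩
end
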